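/- arXiv:1111.0231 — 6 statements merged into one kernel-verified Lean document; each statement's English description precedes it below -/
import Mathlib

section
/- Let b, ν be real numbers with b ≥ 0 and b − ν < −1. Then there exists a constant C > 0, depending only on b and ν, such that for every τ > 1 the integral I♯(τ) = ∫_1^∞ t^b / ((t − τ²)² + 4τ²)^{ν/2} dt is finite and satisfies I♯(τ) ≤ C τ^{2b+1−ν}. -/
open MeasureTheory Set

lemma aux_g_cont (ν : ℝ) : Continuous (fun u : ℝ => ((1 + u ^ 2) ^ (ν / 2))⁻¹) := by
  have h : ∀ u : ℝ, (0:ℝ) < 1 + u ^ 2 := fun u => by positivity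
  exact ((continuous_const.add (continuous_pow 2)).rpow_const
    (fun u => Or.inl (h u).ne')).inv₀ (fun u => (Real.rpow_pos_of_pos (h u) _).ne')

lemma aux_g_integrable (ν : ℝ) (hν : 1 < ν) :
    Integrable (fun u : ℝ => ((1 + u ^ 2) ^ (ν / 2))⁻¹) := by
  have h : ∀ u : ℝ, (0:ℝ) < 1 + u ^ 2 := fun u => by positivity
  have hIoi : IntegrableOn (fun u : ℝ => ((1 + u ^ 2) ^ (ν / 2))⁻¹) (Ioi 1) := by
    refine Integrable.mono' (integrableOn_Ioi_rpow_of_lt (by linarith : -ν < -1) one_pos)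
      ((aux_g_cont ν).aestronglyMeasurable.restrict) ?_
    filter_upwards [ae_restrict_mem measurableSet_Ioi] with u hu
    have hu1 : (1:ℝ) < u := hu
    rw [Real.norm_eq_abs, abs_of_nonneg (by positivity)]
    rw [Real.rpow_neg (by linarith)]
    refine inv_anti₀ (by positivity) ?_
    calc u ^ ν = (u ^ 2) ^ (ν/2) := by
          rw [← Real.rpow_natCast u 2, ← Real.rpow_mul (by linarith)]
          push_cast
          ring_nf
      _ ≤ (1 + u ^ 2) ^ (ν/2) :=
          Real.rpow_le_rpow (by positivity) (by linarith) (by linarith)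
  have hIcc : IntegrableOn (fun u : ℝ => ((1 + u ^ 2) ^ (ν / 2))⁻¹) (Icc (-1) 1) :=
    (aux_g_cont ν).continuousOn.integrableOn_compact isCompact_Icc
  have hIic : IntegrableOn (fun u : ℝ => ((1 + u ^ 2) ^ (ν / 2))⁻¹) (Iic (-1)) := by
    rw [← Measure.map_neg_eq_self (volume : Measure ℝ)]
    have m : MeasurableEmbedding fun x : ℝ => -x := (Homeomorph.neg ℝ).measurableEmbedding
    rw [m.integrableOn_map_iff]
    have heq : ((fun u : ℝ => ((1 + u ^ 2) ^ (ν / 2))⁻¹) ∘ fun x : ℝ => -x)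
        = fun u : ℝ => ((1 + u ^ 2) ^ (ν / 2))⁻¹ := by
      funext x; simp [Function.comp, neg_sq]
    rw [heq, neg_preimage, neg_Iic, neg_neg]
    exact Iff.mpr integrableOn_Ici_iff_integrableOn_Ioi hIoi
  have : IntegrableOn (fun u : ℝ => ((1 + u ^ 2) ^ (ν / 2))⁻¹) (Iic (-1) ∪ (Icc (-1) 1 ∪ Ioi 1)) :=
    hIic.union (hIcc.union hIoi)
  rw [Icc_union_Ioi_eq_Ici (by norm_num), Iic_union_Ici] at this
  rwa [integrableOn_univ] at this



lemma aux_D_eq (ν τ : ℝ) (hτ : 0 < τ) (t : ℝ) :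
    (((t - τ ^ 2) ^ 2 + 4 * τ ^ 2) ^ (ν / 2))⁻¹
      = ((2 * τ) ^ ν)⁻¹ * ((1 + (t / (2 * τ) - τ / 2) ^ 2) ^ (ν / 2))⁻¹ := by
  have hτ0 : (2 * τ) ≠ 0 := by positivity
  have h1 : (t - τ ^ 2) ^ 2 + 4 * τ ^ 2
      = (1 + (t / (2 * τ) - τ / 2) ^ 2) * (2 * τ) ^ 2 := by
    field_simp
    ring
  rw [h1, Real.mul_rpow (by positivity) (by positivity)]
  have h2 : ((2 * τ) ^ 2 : ℝ) ^ (ν / 2) = (2 * τ) ^ ν := by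
    rw [← Real.rpow_natCast (2 * τ) 2, ← Real.rpow_mul (by positivity)]
    push_cast
    ring_nf
  rw [h2, mul_inv]
  ring

lemma aux_mid (ν τ : ℝ) (hν : 1 < ν) (hτ : 1 < τ) :
    Integrable (fun t : ℝ => (((t - τ ^ 2) ^ 2 + 4 * τ ^ 2) ^ (ν / 2))⁻¹) ∧
    (∫ t : ℝ, (((t - τ ^ 2) ^ 2 + 4 * τ ^ 2) ^ (ν / 2))⁻¹)
      = 2 ^ (1 - ν) * τ ^ (1 - ν) * ∫ u : ℝ, ((1 + u ^ 2) ^ (ν / 2))⁻¹ := by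
  have hτ0 : (0:ℝ) < τ := by linarith
  have h2τ : (2 * τ) ≠ 0 := by positivity
  have hK := aux_g_integrable ν hν
  have hint : Integrable (fun t : ℝ => ((1 + (t / (2 * τ) - τ / 2) ^ 2) ^ (ν / 2))⁻¹) := by
    have h1 : Integrable (fun x : ℝ => ((1 + (x - τ / 2) ^ 2) ^ (ν / 2))⁻¹) :=
      hK.comp_sub_right (τ / 2)
    exact h1.comp_div h2τ
  have heq : (fun t : ℝ => (((t - τ ^ 2) ^ 2 + 4 * τ ^ 2) ^ (ν / 2))⁻¹)
      = fun t : ℝ => ((2 * τ) ^ ν)⁻¹ * ((1 + (t / (2 * τ) - τ / 2) ^ 2) ^ (ν / 2))⁻¹ := by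
    funext t; exact aux_D_eq ν τ hτ0 t
  constructor
  · rw [heq]; exact hint.const_mul _
  · rw [heq, integral_const_mul]
    have h3 : (∫ t : ℝ, ((1 + (t / (2 * τ) - τ / 2) ^ 2) ^ (ν / 2))⁻¹)
        = |2 * τ| • ∫ x : ℝ, ((1 + (x - τ / 2) ^ 2) ^ (ν / 2))⁻¹ :=
      MeasureTheory.Measure.integral_comp_div (fun x : ℝ => ((1 + (x - τ / 2) ^ 2) ^ (ν / 2))⁻¹) (2 * τ)
    rw [h3, integral_sub_right_eq_self (fun u : ℝ => ((1 + u ^ 2) ^ (ν / 2))⁻¹) (τ / 2)]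
    rw [abs_of_pos (by positivity : (0:ℝ) < 2 * τ)]
    have h4 : ((2 * τ) ^ ν)⁻¹ * ((2 * τ) • ∫ u : ℝ, ((1 + u ^ 2) ^ (ν / 2))⁻¹)
        = ((2 * τ) ^ ν)⁻¹ * (2 * τ) * ∫ u : ℝ, ((1 + u ^ 2) ^ (ν / 2))⁻¹ := by
      rw [smul_eq_mul]; ring
    rw [h4]
    congr 1
    rw [Real.mul_rpow (by norm_num) (le_of_lt hτ0), Real.rpow_sub (by norm_num),
      Real.rpow_sub hτ0, Real.rpow_one, Real.rpow_one]
    field_simp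

/-- Case (a) of the integral estimate for
`I♯(τ) = ∫_1^∞ t^b / ((t − τ²)² + 4τ²)^{ν/2} dt`:
if `b ≥ 0` and `b − ν < −1`, then `I♯(τ) ≤ C τ^{2b+1−ν}` for all `τ > 1`. -/
theorem integral_sharp_bound_case_a (b ν : ℝ) (hb : 0 ≤ b) (hbν : b - ν < -1) :
    ∃ C : ℝ, 0 < C ∧ ∀ τ : ℝ, 1 < τ →
      IntegrableOn (fun t : ℝ => t ^ b / ((t - τ ^ 2) ^ 2 + 4 * τ ^ 2) ^ (ν / 2))
        (Ioi 1) volume ∧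
      (∫ t in Ioi (1 : ℝ), t ^ b / ((t - τ ^ 2) ^ 2 + 4 * τ ^ 2) ^ (ν / 2)) ≤
        C * τ ^ (2 * b + 1 - ν) := by
  have hν : 1 < ν := by linarith
  set K : ℝ := ∫ u : ℝ, ((1 + u ^ 2) ^ (ν / 2))⁻¹ with hKdef
  have hK0 : 0 ≤ K := integral_nonneg fun u => by positivity
  have hνb : (0:ℝ) < ν - b - 1 := by linarith
  refine ⟨2 ^ (1 + b - ν) * K + 2 ^ (b + 1) / (ν - b - 1), by positivity, fun τ hτ => ?_⟩
  have hτ0 : (0:ℝ) < τ := by linarith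
  have hT1 : (1:ℝ) < τ ^ 2 := by nlinarith
  have h2T : (1:ℝ) ≤ 2 * τ ^ 2 := by nlinarith
  set f : ℝ → ℝ := fun t => t ^ b / ((t - τ ^ 2) ^ 2 + 4 * τ ^ 2) ^ (ν / 2) with hfdef
  have hDpos : ∀ t : ℝ, (0:ℝ) < ((t - τ ^ 2) ^ 2 + 4 * τ ^ 2) ^ (ν / 2) := by
    intro t
    have : (0:ℝ) < (t - τ ^ 2) ^ 2 + 4 * τ ^ 2 := by positivity
    positivity
  have hmeas : Measurable f := by
    have h1 : Measurable fun t : ℝ => t ^ b := by measurability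
    have h2 : Continuous fun t : ℝ => ((t - τ ^ 2) ^ 2 + 4 * τ ^ 2) ^ (ν / 2) :=
      (((continuous_id.sub continuous_const).pow 2).add continuous_const).rpow_const
        (fun t => Or.inl (by positivity : (0:ℝ) < (t - τ ^ 2) ^ 2 + 4 * τ ^ 2).ne')
    exact h1.div h2.measurable
  -- the constant-multiple of the mid integrand
  have hmid := aux_mid ν τ hν hτ
  have hbnd1int : Integrable
      (fun t : ℝ => 2 ^ b * τ ^ (2 * b) * (((t - τ ^ 2) ^ 2 + 4 * τ ^ 2) ^ (ν / 2))⁻¹) :=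
    hmid.1.const_mul _
  have hbound1 : ∀ t ∈ Ioc (1:ℝ) (2 * τ ^ 2),
      f t ≤ 2 ^ b * τ ^ (2 * b) * (((t - τ ^ 2) ^ 2 + 4 * τ ^ 2) ^ (ν / 2))⁻¹ := by
    intro t ht
    have ht0 : (0:ℝ) < t := lt_trans one_pos ht.1
    have htb : t ^ b ≤ 2 ^ b * τ ^ (2 * b) := by
      have h1 : t ^ b ≤ (2 * τ ^ 2) ^ b :=
        Real.rpow_le_rpow ht0.le ht.2 hb
      have h2 : ((2:ℝ) * τ ^ 2) ^ b = 2 ^ b * τ ^ (2 * b) := by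
        rw [Real.mul_rpow (by norm_num) (by positivity)]
        congr 1
        rw [← Real.rpow_natCast τ 2, ← Real.rpow_mul hτ0.le]
        norm_num
      linarith [h1, h2.le, h2.ge]
    calc f t = t ^ b * (((t - τ ^ 2) ^ 2 + 4 * τ ^ 2) ^ (ν / 2))⁻¹ := div_eq_mul_inv _ _
      _ ≤ 2 ^ b * τ ^ (2 * b) * (((t - τ ^ 2) ^ 2 + 4 * τ ^ 2) ^ (ν / 2))⁻¹ :=
        mul_le_mul_of_nonneg_right htb (by positivity)
  have hint1 : IntegrableOn f (Ioc 1 (2 * τ ^ 2)) := by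
    refine Integrable.mono' hbnd1int.integrableOn hmeas.aestronglyMeasurable.restrict ?_
    filter_upwards [ae_restrict_mem measurableSet_Ioc] with t ht
    have ht0 : (0:ℝ) < t := lt_trans one_pos ht.1
    rw [Real.norm_eq_abs, abs_of_nonneg (by positivity)]
    exact hbound1 t ht
  have hIB1 : (∫ t in Ioc (1:ℝ) (2 * τ ^ 2), f t)
      ≤ 2 ^ (1 + b - ν) * K * τ ^ (2 * b + 1 - ν) := by
    have step1 : (∫ t in Ioc (1:ℝ) (2 * τ ^ 2), f t)
        ≤ ∫ t in Ioc (1:ℝ) (2 * τ ^ 2),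
            2 ^ b * τ ^ (2 * b) * (((t - τ ^ 2) ^ 2 + 4 * τ ^ 2) ^ (ν / 2))⁻¹ :=
      setIntegral_mono_on hint1 hbnd1int.integrableOn measurableSet_Ioc hbound1
    have step2 : (∫ t in Ioc (1:ℝ) (2 * τ ^ 2),
            2 ^ b * τ ^ (2 * b) * (((t - τ ^ 2) ^ 2 + 4 * τ ^ 2) ^ (ν / 2))⁻¹)
        ≤ ∫ t : ℝ, 2 ^ b * τ ^ (2 * b) * (((t - τ ^ 2) ^ 2 + 4 * τ ^ 2) ^ (ν / 2))⁻¹ :=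
      setIntegral_le_integral hbnd1int (Filter.Eventually.of_forall fun t => by positivity)
    have step3 : (∫ t : ℝ, 2 ^ b * τ ^ (2 * b) * (((t - τ ^ 2) ^ 2 + 4 * τ ^ 2) ^ (ν / 2))⁻¹)
        = 2 ^ (1 + b - ν) * K * τ ^ (2 * b + 1 - ν) := by
      rw [integral_const_mul, hmid.2, ← hKdef]
      rw [show (1:ℝ) + b - ν = b + (1 - ν) by ring, Real.rpow_add (by norm_num),
        show (2:ℝ) * b + 1 - ν = 2 * b + (1 - ν) by ring, Real.rpow_add hτ0]
      ring
    linarith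
  -- tail piece
  have htail_int : IntegrableOn (fun t : ℝ => 2 ^ ν * t ^ (b - ν)) (Ioi (2 * τ ^ 2)) :=
    (integrableOn_Ioi_rpow_of_lt (by linarith) (by positivity)).const_mul _
  have hbound2 : ∀ t ∈ Ioi (2 * τ ^ 2), f t ≤ 2 ^ ν * t ^ (b - ν) := by
    intro t ht
    have ht' : 2 * τ ^ 2 < t := ht
    have ht0 : (0:ℝ) < t := by nlinarith
    have hhalf : t / 2 ≤ t - τ ^ 2 := by nlinarith
    have hD : (t / 2) ^ ν / 1 ≤ ((t - τ ^ 2) ^ 2 + 4 * τ ^ 2) ^ (ν / 2) := by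
      rw [div_one]
      calc (t / 2) ^ ν = ((t / 2) ^ 2) ^ (ν / 2) := by
            rw [← Real.rpow_natCast (t/2) 2, ← Real.rpow_mul (by positivity)]
            push_cast
            ring_nf
        _ ≤ ((t - τ ^ 2) ^ 2 + 4 * τ ^ 2) ^ (ν / 2) := by
            apply Real.rpow_le_rpow (by positivity) _ (by linarith)
            nlinarith
    have hDpos' := hDpos t
    have h1 : f t ≤ t ^ b / (t / 2) ^ ν := by
      apply div_le_div_of_nonneg_left (by positivity) (by positivity)
      rw [div_one] at hD; exact hD
    have h2 : t ^ b / (t / 2) ^ ν = 2 ^ ν * t ^ (b - ν) := by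
      rw [Real.div_rpow ht0.le (by norm_num), Real.rpow_sub ht0]
      field_simp
    linarith [h1, h2.le]
  have hint2 : IntegrableOn f (Ioi (2 * τ ^ 2)) := by
    refine Integrable.mono' htail_int hmeas.aestronglyMeasurable.restrict ?_
    filter_upwards [ae_restrict_mem measurableSet_Ioi] with t ht
    have ht0 : (0:ℝ) < t := by have : 2 * τ ^ 2 < t := ht; nlinarith
    rw [Real.norm_eq_abs, abs_of_nonneg (by positivity)]
    exact hbound2 t ht
  have hIB2 : (∫ t in Ioi (2 * τ ^ 2), f t)
      ≤ 2 ^ (b + 1) / (ν - b - 1) * τ ^ (2 * b + 1 - ν) := by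
    have step1 : (∫ t in Ioi (2 * τ ^ 2), f t) ≤ ∫ t in Ioi (2 * τ ^ 2), 2 ^ ν * t ^ (b - ν) :=
      setIntegral_mono_on hint2 htail_int measurableSet_Ioi hbound2
    have step2 : (∫ t in Ioi (2 * τ ^ 2), 2 ^ ν * t ^ (b - ν))
        = 2 ^ ν * ((2 * τ ^ 2) ^ (b - ν + 1) / (ν - b - 1)) := by
      rw [integral_const_mul, integral_Ioi_rpow_of_lt (by linarith) (by positivity)]
      congr 1
      have hne1 : b - ν + 1 ≠ 0 := ne_of_lt (by linarith)
      have hne2 : ν - b - 1 ≠ 0 := ne_of_gt hνb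
      field_simp
      ring
    have step3 : (2:ℝ) ^ ν * ((2 * τ ^ 2) ^ (b - ν + 1) / (ν - b - 1))
        ≤ 2 ^ (b + 1) / (ν - b - 1) * τ ^ (2 * b + 1 - ν) := by
      have hpow : ((2:ℝ) * τ ^ 2) ^ (b - ν + 1)
          = 2 ^ (b - ν + 1) * τ ^ (2 * (b - ν + 1)) := by
        rw [Real.mul_rpow (by norm_num) (by positivity)]
        congr 1
        rw [← Real.rpow_natCast τ 2, ← Real.rpow_mul hτ0.le]
        push_cast
        ring_nf
      have hτpow : τ ^ (2 * (b - ν + 1)) ≤ τ ^ (2 * b + 1 - ν) :=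
        Real.rpow_le_rpow_of_exponent_le hτ.le (by linarith)
      have h2pow : (2:ℝ) ^ ν * 2 ^ (b - ν + 1) = 2 ^ (b + 1) := by
        rw [← Real.rpow_add (by norm_num)]
        ring_nf
      calc (2:ℝ) ^ ν * ((2 * τ ^ 2) ^ (b - ν + 1) / (ν - b - 1))
          = (2 ^ ν * 2 ^ (b - ν + 1)) * τ ^ (2 * (b - ν + 1)) / (ν - b - 1) := by
            rw [hpow]; ring
        _ = 2 ^ (b + 1) / (ν - b - 1) * τ ^ (2 * (b - ν + 1)) := by rw [h2pow]; ring
        _ ≤ 2 ^ (b + 1) / (ν - b - 1) * τ ^ (2 * b + 1 - ν) := by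
            exact mul_le_mul_of_nonneg_left hτpow (by positivity)
    linarith
  -- combine
  have hsplit : Ioi (1:ℝ) = Ioc 1 (2 * τ ^ 2) ∪ Ioi (2 * τ ^ 2) :=
    (Ioc_union_Ioi_eq_Ioi h2T).symm
  have hdisj : Disjoint (Ioc (1:ℝ) (2 * τ ^ 2)) (Ioi (2 * τ ^ 2)) := Ioc_disjoint_Ioi le_rfl
  constructor
  · rw [hsplit]; exact hint1.union hint2
  · rw [hsplit, setIntegral_union hdisj measurableSet_Ioi hint1 hint2]
    have : 2 ^ (1 + b - ν) * K * τ ^ (2 * b + 1 - ν)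
        + 2 ^ (b + 1) / (ν - b - 1) * τ ^ (2 * b + 1 - ν)
        = (2 ^ (1 + b - ν) * K + 2 ^ (b + 1) / (ν - b - 1)) * τ ^ (2 * b + 1 - ν) := by ring
    linarith
end

section
/- Let b, ν be real numbers with −1 ≤ b < 0 and b − ν < −1. Then for every ε > 0 there exists a constant C_ε > 0, depending only on b, ν and ε, such that for every τ > 1 the integral I♯(τ) = ∫_1^∞ t^b / ((t − τ²)² + 4τ²)^{ν/2} dt is finite and satisfies I♯(τ) ≤ C_ε τ^{ε+b+1−ν}. -/
open MeasureTheory Set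

open intervalIntegral

lemma pow_two_rpow {x : ℝ} (hx : 0 ≤ x) (r : ℝ) : (x ^ 2 : ℝ) ^ r = x ^ (2 * r) := by
  rw [← Real.rpow_natCast x 2, ← Real.rpow_mul hx]; norm_num

lemma sq_rpow_half {x : ℝ} (hx : 0 ≤ x) (r : ℝ) : (x ^ 2 : ℝ) ^ (r / 2) = x ^ r := by
  rw [pow_two_rpow hx]; ring_nf

lemma piece_est {f g : ℝ → ℝ} {s : Set ℝ} (e : ℝ) (hs : MeasurableSet s)
    (hf : AEStronglyMeasurable f (volume.restrict s))
    (h0 : ∀ t ∈ s, 0 ≤ f t)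
    (hfg : ∀ t ∈ s, t ≠ e → f t ≤ g t)
    (hg : IntegrableOn g s) {B : ℝ} (hB : (∫ t in s, g t) ≤ B) :
    IntegrableOn f s ∧ (∫ t in s, f t) ≤ B := by
  have hne : ∀ᵐ t ∂(volume.restrict s), t ≠ e := by
    refine ae_restrict_of_ae ?_
    rw [ae_iff]
    simpa using measure_singleton (μ := (volume : Measure ℝ)) e
  have hae : ∀ᵐ t ∂(volume.restrict s), f t ≤ g t := by
    filter_upwards [ae_restrict_mem hs, hne] with t h1 h2 using hfg t h1 h2
  have hint : IntegrableOn f s := by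
    refine hg.mono' hf ?_
    filter_upwards [hae, ae_restrict_mem hs] with t h1 h2
    rw [Real.norm_eq_abs, abs_of_nonneg (h0 t h2)]; exact h1
  exact ⟨hint, le_trans (integral_mono_ae hint hg hae) hB⟩

set_option maxHeartbeats 2000000 in
/-- Case (b) of the integral estimate for
`I♯(τ) = ∫_1^∞ t^b / ((t − τ²)² + 4τ²)^{ν/2} dt`:
if `−1 ≤ b < 0` and `b − ν < −1`, then for every `ε > 0` one has
`I♯(τ) ≤ C_ε τ^{ε+b+1−ν}` for all `τ > 1`. -/
theorem integral_sharp_bound_case_b (b ν : ℝ) (hb1 : -1 ≤ b) (hb2 : b < 0)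
    (hbν : b - ν < -1) :
    ∀ ε : ℝ, 0 < ε → ∃ C : ℝ, 0 < C ∧ ∀ τ : ℝ, 1 < τ →
      IntegrableOn (fun t : ℝ => t ^ b / ((t - τ ^ 2) ^ 2 + 4 * τ ^ 2) ^ (ν / 2))
        (Ioi 1) volume ∧
      (∫ t in Ioi (1 : ℝ), t ^ b / ((t - τ ^ 2) ^ 2 + 4 * τ ^ 2) ^ (ν / 2)) ≤
        C * τ ^ (ε + b + 1 - ν) := by
  intro ε hε
  have hν0 : 0 < ν := by linarith
  set γ : ℝ := min ν ((b + 2) / 2) with hγdef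
  have hγ0 : 0 < γ := lt_min hν0 (by linarith)
  have hγ1 : γ < 1 := lt_of_le_of_lt (min_le_right _ _) (by linarith)
  have hγν : γ ≤ ν := min_le_left _ _
  have hγb : b + 1 ≤ γ := le_min (by linarith) (by linarith)
  have hγ1' : (0:ℝ) < 1 - γ := by linarith
  set q : ℝ := b + ε / 2 + 1 with hqdef
  have hq0 : 0 < q := by simp only [hqdef]; linarith
  have hνb1 : (0:ℝ) < ν - b - 1 := by linarith
  refine ⟨(2:ℝ) ^ ν / q + (2:ℝ) ^ (-b) / (1 - γ) + 1 / (1 - γ) + (2:ℝ) ^ ν / (ν - b - 1),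
    by
      have h2ν : (0:ℝ) < (2:ℝ) ^ ν := Real.rpow_pos_of_pos two_pos ν
      have h2b : (0:ℝ) < (2:ℝ) ^ (-b) := Real.rpow_pos_of_pos two_pos (-b)
      have := div_pos h2ν hq0
      have := div_pos h2b hγ1'
      have := div_pos one_pos hγ1'
      have := div_pos h2ν hνb1
      linarith, ?_⟩
  intro τ hτ
  have hτ0 : (0:ℝ) < τ := by linarith
  have hT1 : (1:ℝ) < τ ^ 2 := by nlinarith
  have hT0 : (0:ℝ) < τ ^ 2 := by nlinarith
  set m : ℝ := max 1 (τ ^ 2 / 2) with hmdef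
  set M : ℝ := 2 * τ ^ 2 with hMdef
  have hm1 : (1:ℝ) ≤ m := le_max_left _ _
  have hmT : m ≤ τ ^ 2 := max_le (by linarith) (by linarith)
  have hm2 : τ ^ 2 / 2 ≤ m := le_max_right _ _
  have hTM : τ ^ 2 ≤ M := by simp only [hMdef]; linarith
  have h1M : (1:ℝ) ≤ M := by linarith
  have hM0 : (0:ℝ) < M := by linarith
  set F : ℝ → ℝ := fun t : ℝ => t ^ b / ((t - τ ^ 2) ^ 2 + 4 * τ ^ 2) ^ (ν / 2) with hFdef
  have hXpos : ∀ t : ℝ, 0 < (t - τ ^ 2) ^ 2 + 4 * τ ^ 2 := by intro t; positivity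
  have hXsq : ∀ t : ℝ, (t - τ ^ 2) ^ 2 ≤ (t - τ ^ 2) ^ 2 + 4 * τ ^ 2 := by
    intro t; nlinarith
  have hX4 : ∀ t : ℝ, τ ^ 2 ≤ (t - τ ^ 2) ^ 2 + 4 * τ ^ 2 := by
    intro t; nlinarith [sq_nonneg (t - τ ^ 2)]
  have hcont : ContinuousOn F (Ioi 0) := by
    apply ContinuousOn.div
    · exact fun t ht => (Real.continuousAt_rpow_const t b
        (Or.inl (ne_of_gt ht))).continuousWithinAt
    · apply Continuous.continuousOn
      exact (by continuity : Continuous fun t : ℝ => (t - τ ^ 2) ^ 2 + 4 * τ ^ 2).rpow_const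
        fun t => Or.inl (ne_of_gt (hXpos t))
    · exact fun t _ => ne_of_gt (Real.rpow_pos_of_pos (hXpos t) _)
  have hmeasF : ∀ s : Set ℝ, MeasurableSet s → s ⊆ Ioi 0 →
      AEStronglyMeasurable F (volume.restrict s) :=
    fun s hs hsub => (hcont.mono hsub).aestronglyMeasurable hs
  have hFnonneg : ∀ t : ℝ, 0 < t → 0 ≤ F t := fun t ht =>
    div_nonneg (Real.rpow_nonneg ht.le b) (Real.rpow_nonneg (hXpos t).le _)
  have hmono : ∀ r s : ℝ, r ≤ s → τ ^ r ≤ τ ^ s :=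
    fun r s h => Real.rpow_le_rpow_of_exponent_le hτ.le h
  set E : ℝ := ε + b + 1 - ν with hEdef
  -- the lower bound for the denominator used in the middle pieces
  have hden2 : ∀ t : ℝ, (t - τ ^ 2) ^ 2 ≤ (t - τ ^ 2) ^ 2 + 4 * τ ^ 2 → True := fun _ _ => trivial
  have hXlow : ∀ t x : ℝ, 0 ≤ x → x ^ 2 ≤ (t - τ ^ 2) ^ 2 →
      τ ^ (ν - γ) * x ^ γ ≤ ((t - τ ^ 2) ^ 2 + 4 * τ ^ 2) ^ (ν / 2) := by
    intro t x hx hx2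
    have e1 : ((t - τ ^ 2) ^ 2 + 4 * τ ^ 2) ^ (ν / 2)
        = ((t - τ ^ 2) ^ 2 + 4 * τ ^ 2) ^ ((ν - γ) / 2)
          * ((t - τ ^ 2) ^ 2 + 4 * τ ^ 2) ^ (γ / 2) := by
      rw [← Real.rpow_add (hXpos t)]; ring_nf
    rw [e1]
    have h1 : τ ^ (ν - γ) ≤ ((t - τ ^ 2) ^ 2 + 4 * τ ^ 2) ^ ((ν - γ) / 2) := by
      rw [← sq_rpow_half hτ0.le (ν - γ)]
      exact Real.rpow_le_rpow (by positivity) (hX4 t) (by linarith)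
    have h2 : x ^ γ ≤ ((t - τ ^ 2) ^ 2 + 4 * τ ^ 2) ^ (γ / 2) := by
      rw [← sq_rpow_half hx γ]
      exact Real.rpow_le_rpow (by positivity) (le_trans hx2 (hXsq t)) (by linarith)
    exact mul_le_mul h1 h2 (Real.rpow_nonneg hx γ)
      (Real.rpow_nonneg (hXpos t).le _)
  -- Piece A : Ioc 1 m
  have hIA : IntegrableOn F (Ioc 1 m) ∧
      (∫ t in Ioc 1 m, F t) ≤ (2:ℝ) ^ ν / q * τ ^ E := by
    have hgint : IntervalIntegrable (fun t : ℝ => t ^ (b + ε / 2)) volume 1 m :=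
      intervalIntegrable_rpow' (by linarith)
    have hgint' : IntegrableOn (fun t : ℝ => t ^ (b + ε / 2) / (τ ^ 2 / 2) ^ ν) (Ioc 1 m) :=
      (hgint.div_const _).1
    refine piece_est 0 measurableSet_Ioc
      (hmeasF _ measurableSet_Ioc (fun t ht => lt_trans zero_lt_one ht.1))
      (fun t ht => hFnonneg t (lt_trans zero_lt_one ht.1)) ?_ hgint' ?_
    · rintro t ⟨ht1, htm⟩ -
      have htm' : t ≤ τ ^ 2 / 2 := by
        rcases le_or_gt (τ ^ 2 / 2) 1 with h | h
        · exfalso; rw [hmdef, max_eq_left h] at htm; linarith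
        · rwa [hmdef, max_eq_right h.le] at htm
      have hden : (τ ^ 2 / 2) ^ ν ≤ ((t - τ ^ 2) ^ 2 + 4 * τ ^ 2) ^ (ν / 2) := by
        have h1 : (τ ^ 2 / 2) ^ 2 ≤ (t - τ ^ 2) ^ 2 + 4 * τ ^ 2 := by nlinarith
        calc (τ ^ 2 / 2) ^ ν = ((τ ^ 2 / 2) ^ 2 : ℝ) ^ (ν / 2) := by
              rw [sq_rpow_half (by linarith)]
          _ ≤ _ := Real.rpow_le_rpow (by positivity) h1 (by linarith)
      exact div_le_div₀ (Real.rpow_nonneg (by linarith) _)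
        (Real.rpow_le_rpow_of_exponent_le ht1.le (by linarith))
        (Real.rpow_pos_of_pos (by positivity) _) hden
    · have hval : (∫ t in Ioc 1 m, t ^ (b + ε / 2) / (τ ^ 2 / 2) ^ ν)
          = ((m ^ q - 1) / q) / (τ ^ 2 / 2) ^ ν := by
        rw [MeasureTheory.integral_div, ← intervalIntegral.integral_of_le hm1,
          integral_rpow (Or.inl (by linarith : (-1:ℝ) < b + ε / 2)), Real.one_rpow, ← hqdef]
      rw [hval]
      have hnum : m ^ q - 1 ≤ (τ ^ 2) ^ q := by
        have := Real.rpow_le_rpow (by linarith : (0:ℝ) ≤ m) hmT hq0.le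
        linarith
      calc ((m ^ q - 1) / q) / (τ ^ 2 / 2) ^ ν
          ≤ ((τ ^ 2) ^ q / q) / (τ ^ 2 / 2) ^ ν := by
            apply div_le_div₀ (div_nonneg (Real.rpow_nonneg hT0.le _) hq0.le)
              (div_le_div₀ (Real.rpow_nonneg hT0.le _) hnum hq0 le_rfl)
              (Real.rpow_pos_of_pos (by positivity) _) le_rfl
        _ = (2:ℝ) ^ ν / q * (τ ^ (2 * q) / τ ^ (2 * ν)) := by
            rw [Real.div_rpow hT0.le (by norm_num : (0:ℝ) ≤ 2), pow_two_rpow hτ0.le,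
              pow_two_rpow hτ0.le]
            have h1 : (τ:ℝ) ^ (2*q) ≠ 0 := ne_of_gt (Real.rpow_pos_of_pos hτ0 _)
            have h2 : (τ:ℝ) ^ (2*ν) ≠ 0 := ne_of_gt (Real.rpow_pos_of_pos hτ0 _)
            have h3 : ((2:ℝ) ^ ν) ≠ 0 := ne_of_gt (Real.rpow_pos_of_pos two_pos _)
            field_simp
        _ = (2:ℝ) ^ ν / q * τ ^ (2 * q - 2 * ν) := by rw [← Real.rpow_sub hτ0]
        _ ≤ (2:ℝ) ^ ν / q * τ ^ E := by
            apply mul_le_mul_of_nonneg_left (hmono _ _ ?_)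
              (div_nonneg (Real.rpow_nonneg (by norm_num) _) hq0.le)
            simp only [hqdef, hEdef]; linarith
  -- Piece B1 : Ioc m (τ^2)
  have hIB1 : IntegrableOn F (Ioc m (τ ^ 2)) ∧
      (∫ t in Ioc m (τ ^ 2), F t) ≤ (2:ℝ) ^ (-b) / (1 - γ) * τ ^ E := by
    have hgint : IntervalIntegrable (fun t : ℝ => (τ ^ 2 - t) ^ (-γ)) volume m (τ ^ 2) := by
      have := (intervalIntegrable_rpow' (show (-1:ℝ) < -γ by linarith)
        (a := τ ^ 2 - m) (b := 0)).comp_sub_left (τ ^ 2)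
      simpa using this
    have hgint' : IntegrableOn
        (fun t : ℝ => (τ ^ 2 / 2) ^ b / τ ^ (ν - γ) * (τ ^ 2 - t) ^ (-γ)) (Ioc m (τ ^ 2)) :=
      (hgint.const_mul _).1
    refine piece_est (τ ^ 2) measurableSet_Ioc
      (hmeasF _ measurableSet_Ioc (fun t ht => lt_of_lt_of_le zero_lt_one (le_trans hm1 ht.1.le)))
      (fun t ht => hFnonneg t (lt_of_lt_of_le zero_lt_one (le_trans hm1 ht.1.le))) ?_ hgint' ?_
    · rintro t ⟨hmt, htT⟩ hne
      have htT' : t < τ ^ 2 := lt_of_le_of_ne htT hne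
      have ht2 : τ ^ 2 / 2 ≤ t := le_trans hm2 hmt.le
      have ht0 : (0:ℝ) < t := by linarith
      have hlow := hXlow t (τ ^ 2 - t) (by linarith) (by nlinarith)
      calc F t ≤ (τ ^ 2 / 2) ^ b / (τ ^ (ν - γ) * (τ ^ 2 - t) ^ γ) := by
            apply div_le_div₀ (Real.rpow_nonneg (by positivity) _)
              (Real.rpow_le_rpow_of_nonpos (by positivity) ht2 hb2.le)
              (mul_pos (Real.rpow_pos_of_pos hτ0 _)
                (Real.rpow_pos_of_pos (by linarith) _)) hlow
        _ = (τ ^ 2 / 2) ^ b / τ ^ (ν - γ) * (τ ^ 2 - t) ^ (-γ) := by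
            rw [Real.rpow_neg (by linarith : (0:ℝ) ≤ τ ^ 2 - t)]
            ring
    · have hval : (∫ t in Ioc m (τ ^ 2),
          (τ ^ 2 / 2) ^ b / τ ^ (ν - γ) * (τ ^ 2 - t) ^ (-γ))
          = (τ ^ 2 / 2) ^ b / τ ^ (ν - γ) * ((τ ^ 2 - m) ^ (1 - γ) / (1 - γ)) := by
        rw [← intervalIntegral.integral_of_le hmT, intervalIntegral.integral_const_mul,
          integral_comp_sub_left (fun x : ℝ => x ^ (-γ)) (τ ^ 2)]
        rw [show τ ^ 2 - τ ^ 2 = (0:ℝ) by ring,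
          integral_rpow (Or.inl (by linarith : (-1:ℝ) < -γ)),
          Real.zero_rpow (by linarith : -γ + 1 ≠ 0)]
        rw [show -γ + 1 = 1 - γ by ring]
        ring
      rw [hval]
      calc (τ ^ 2 / 2) ^ b / τ ^ (ν - γ) * ((τ ^ 2 - m) ^ (1 - γ) / (1 - γ))
          ≤ (τ ^ 2 / 2) ^ b / τ ^ (ν - γ) * ((τ ^ 2) ^ (1 - γ) / (1 - γ)) := by
            apply mul_le_mul_of_nonneg_left
              (div_le_div₀ (Real.rpow_nonneg hT0.le _)
                (Real.rpow_le_rpow (by linarith) (by linarith) (by linarith)) hγ1' le_rfl)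
              (div_nonneg (Real.rpow_nonneg (by positivity) _) (Real.rpow_nonneg hτ0.le _))
        _ = (2:ℝ) ^ (-b) / (1 - γ) * τ ^ (2 * b - (ν - γ) + 2 * (1 - γ)) := by
            rw [Real.div_rpow hT0.le (by norm_num : (0:ℝ) ≤ 2), pow_two_rpow hτ0.le,
              pow_two_rpow hτ0.le, Real.rpow_neg (by norm_num : (0:ℝ) ≤ 2)]
            have e : (τ:ℝ) ^ (2 * b - (ν - γ) + 2 * (1 - γ))
                = τ ^ (2 * b) / τ ^ (ν - γ) * τ ^ (2 * (1 - γ)) := by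
              rw [Real.rpow_add hτ0, Real.rpow_sub hτ0]
            rw [e]
            ring
        _ ≤ (2:ℝ) ^ (-b) / (1 - γ) * τ ^ E := by
            apply mul_le_mul_of_nonneg_left (hmono _ _ ?_)
              (div_nonneg (Real.rpow_nonneg (by norm_num) _) hγ1'.le)
            simp only [hEdef]; linarith
  -- Piece B2 : Ioc (τ^2) M
  have hIB2 : IntegrableOn F (Ioc (τ ^ 2) M) ∧
      (∫ t in Ioc (τ ^ 2) M, F t) ≤ 1 / (1 - γ) * τ ^ E := by
    have hgint : IntervalIntegrable (fun t : ℝ => (t - τ ^ 2) ^ (-γ)) volume (τ ^ 2) M := by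
      have := (intervalIntegrable_rpow' (show (-1:ℝ) < -γ by linarith)
        (a := 0) (b := M - τ ^ 2)).comp_sub_right (τ ^ 2)
      simpa using this
    have hgint' : IntegrableOn
        (fun t : ℝ => (τ ^ 2) ^ b / τ ^ (ν - γ) * (t - τ ^ 2) ^ (-γ)) (Ioc (τ ^ 2) M) :=
      (hgint.const_mul _).1
    refine piece_est 0 measurableSet_Ioc
      (hmeasF _ measurableSet_Ioc (fun t ht => lt_trans hT0 ht.1))
      (fun t ht => hFnonneg t (lt_trans hT0 ht.1)) ?_ hgint' ?_
    · rintro t ⟨hTt, htM⟩ -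
      have ht0 : (0:ℝ) < t := lt_trans hT0 hTt
      have hlow := hXlow t (t - τ ^ 2) (by linarith) (by nlinarith)
      calc F t ≤ (τ ^ 2) ^ b / (τ ^ (ν - γ) * (t - τ ^ 2) ^ γ) := by
            apply div_le_div₀ (Real.rpow_nonneg hT0.le _)
              (Real.rpow_le_rpow_of_nonpos hT0 hTt.le hb2.le)
              (mul_pos (Real.rpow_pos_of_pos hτ0 _)
                (Real.rpow_pos_of_pos (by linarith) _)) hlow
        _ = (τ ^ 2) ^ b / τ ^ (ν - γ) * (t - τ ^ 2) ^ (-γ) := by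
            rw [Real.rpow_neg (by linarith : (0:ℝ) ≤ t - τ ^ 2)]
            ring
    · have hval : (∫ t in Ioc (τ ^ 2) M,
          (τ ^ 2) ^ b / τ ^ (ν - γ) * (t - τ ^ 2) ^ (-γ))
          = (τ ^ 2) ^ b / τ ^ (ν - γ) * ((M - τ ^ 2) ^ (1 - γ) / (1 - γ)) := by
        rw [← intervalIntegral.integral_of_le hTM, intervalIntegral.integral_const_mul,
          integral_comp_sub_right (fun x : ℝ => x ^ (-γ)) (τ ^ 2)]
        rw [show τ ^ 2 - τ ^ 2 = (0:ℝ) by ring,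
          integral_rpow (Or.inl (by linarith : (-1:ℝ) < -γ)),
          Real.zero_rpow (by linarith : -γ + 1 ≠ 0)]
        rw [show -γ + 1 = 1 - γ by ring]
        ring
      rw [hval]
      have hMT : M - τ ^ 2 = τ ^ 2 := by rw [hMdef]; ring
      rw [hMT]
      calc (τ ^ 2) ^ b / τ ^ (ν - γ) * ((τ ^ 2) ^ (1 - γ) / (1 - γ))
          = 1 / (1 - γ) * τ ^ (2 * b - (ν - γ) + 2 * (1 - γ)) := by
            rw [pow_two_rpow hτ0.le, pow_two_rpow hτ0.le, Real.rpow_add hτ0,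
              ← Real.rpow_sub hτ0]
            ring
        _ ≤ 1 / (1 - γ) * τ ^ E := by
            apply mul_le_mul_of_nonneg_left (hmono _ _ ?_)
              (div_nonneg zero_le_one hγ1'.le)
            simp only [hEdef]; linarith
  -- Piece C : Ioi M
  have hIC : IntegrableOn F (Ioi M) ∧
      (∫ t in Ioi M, F t) ≤ (2:ℝ) ^ ν / (ν - b - 1) * τ ^ E := by
    have hgint' : IntegrableOn (fun t : ℝ => (2:ℝ) ^ ν * t ^ (b - ν)) (Ioi M) :=
      (integrableOn_Ioi_rpow_of_lt (by linarith) hM0).const_mul _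
    refine piece_est 0 measurableSet_Ioi
      (hmeasF _ measurableSet_Ioi (fun t ht => lt_trans hM0 ht))
      (fun t ht => hFnonneg t (lt_trans hM0 ht)) ?_ hgint' ?_
    · intro t ht hne0
      have htM : M < t := ht
      have ht0 : (0:ℝ) < t := lt_trans hM0 htM
      have hden : (t / 2) ^ ν ≤ ((t - τ ^ 2) ^ 2 + 4 * τ ^ 2) ^ (ν / 2) := by
        have h1 : (t / 2) ^ 2 ≤ (t - τ ^ 2) ^ 2 + 4 * τ ^ 2 := by
          have h2 : t / 2 ≤ t - τ ^ 2 := by rw [hMdef] at htM; linarith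
          nlinarith
        calc (t / 2) ^ ν = ((t / 2) ^ 2 : ℝ) ^ (ν / 2) := by
              rw [sq_rpow_half (by linarith)]
          _ ≤ _ := Real.rpow_le_rpow (by positivity) h1 (by linarith)
      calc F t ≤ t ^ b / (t / 2) ^ ν :=
            div_le_div₀ (Real.rpow_nonneg ht0.le _) le_rfl
              (Real.rpow_pos_of_pos (by linarith) _) hden
        _ = (2:ℝ) ^ ν * t ^ (b - ν) := by
            rw [Real.div_rpow ht0.le (by norm_num : (0:ℝ) ≤ 2), Real.rpow_sub ht0]
            have h1 : (t:ℝ) ^ ν ≠ 0 := ne_of_gt (Real.rpow_pos_of_pos ht0 _)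
            have h3 : ((2:ℝ) ^ ν) ≠ 0 := ne_of_gt (Real.rpow_pos_of_pos two_pos _)
            field_simp
    · have hval : (∫ t in Ioi M, (2:ℝ) ^ ν * t ^ (b - ν))
          = (2:ℝ) ^ ν * (-M ^ (b - ν + 1) / (b - ν + 1)) := by
        rw [MeasureTheory.integral_const_mul, integral_Ioi_rpow_of_lt (by linarith) hM0]
      rw [hval]
      have e1 : -M ^ (b - ν + 1) / (b - ν + 1) = M ^ (b - ν + 1) / (ν - b - 1) := by
        rw [div_eq_div_iff (by linarith) (by linarith)]; ring
      rw [e1]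
      calc (2:ℝ) ^ ν * (M ^ (b - ν + 1) / (ν - b - 1))
          ≤ (2:ℝ) ^ ν * ((τ ^ 2) ^ (b - ν + 1) / (ν - b - 1)) := by
            apply mul_le_mul_of_nonneg_left
              (div_le_div₀ (Real.rpow_nonneg hT0.le _)
                (Real.rpow_le_rpow_of_nonpos hT0 hTM (by linarith)) hνb1 le_rfl)
              (Real.rpow_nonneg (by norm_num) _)
        _ = (2:ℝ) ^ ν / (ν - b - 1) * τ ^ (2 * (b - ν + 1)) := by
            rw [pow_two_rpow hτ0.le]; ring
        _ ≤ (2:ℝ) ^ ν / (ν - b - 1) * τ ^ E := by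
            apply mul_le_mul_of_nonneg_left (hmono _ _ ?_)
              (div_nonneg (Real.rpow_nonneg (by norm_num) _) hνb1.le)
            simp only [hEdef]; linarith
  -- Assemble
  have i1 : IntegrableOn F (Ioc 1 (τ ^ 2)) := by
    rw [← Set.Ioc_union_Ioc_eq_Ioc hm1 hmT]; exact hIA.1.union hIB1.1
  have i2 : IntegrableOn F (Ioc 1 M) := by
    rw [← Set.Ioc_union_Ioc_eq_Ioc (by linarith : (1:ℝ) ≤ τ ^ 2) hTM]
    exact i1.union hIB2.1
  have i3 : IntegrableOn F (Ioi 1) := by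
    rw [← Set.Ioc_union_Ioi_eq_Ioi h1M]; exact i2.union hIC.1
  refine ⟨i3, ?_⟩
  have s1 : (∫ t in Ioc 1 (τ ^ 2), F t)
      = (∫ t in Ioc 1 m, F t) + ∫ t in Ioc m (τ ^ 2), F t := by
    rw [← Set.Ioc_union_Ioc_eq_Ioc hm1 hmT,
      setIntegral_union (Set.Ioc_disjoint_Ioc_of_le le_rfl) measurableSet_Ioc hIA.1 hIB1.1]
  have s2 : (∫ t in Ioc 1 M, F t)
      = (∫ t in Ioc 1 (τ ^ 2), F t) + ∫ t in Ioc (τ ^ 2) M, F t := by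
    rw [← Set.Ioc_union_Ioc_eq_Ioc (by linarith : (1:ℝ) ≤ τ ^ 2) hTM,
      setIntegral_union (Set.Ioc_disjoint_Ioc_of_le le_rfl) measurableSet_Ioc i1 hIB2.1]
  have s3 : (∫ t in Ioi (1:ℝ), F t)
      = (∫ t in Ioc 1 M, F t) + ∫ t in Ioi M, F t := by
    rw [← Set.Ioc_union_Ioi_eq_Ioi h1M,
      setIntegral_union Set.Ioc_disjoint_Ioi_same measurableSet_Ioi i2 hIC.1]
  rw [s3, s2, s1]
  have := hIA.2; have := hIB1.2; have := hIB2.2; have := hIC.2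
  rw [add_mul, add_mul, add_mul]
  linarith
end

section
/- Let b, ν be real numbers with b < 0 and ν > 1. Then there exists a constant C > 0, depending only on b and ν, such that for every τ > 1 the integral I♯(τ) = ∫_1^∞ t^b / ((t − τ²)² + 4τ²)^{ν/2} dt is finite and satisfies I♯(τ) ≤ C τ^{1−ν}. -/
open MeasureTheory Set Real Filter

/-- Intermediate integral estimate for
`I♯(τ) = ∫_1^∞ t^b / ((t − τ²)² + 4τ²)^{ν/2} dt`:
if `b < 0` and `ν > 1`, then `I♯(τ) ≤ C τ^{1−ν}` for all `τ > 1`. -/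
theorem integral_sharp_bound_intermediate (b ν : ℝ) (hb : b < 0) (hν : 1 < ν) :
    ∃ C : ℝ, 0 < C ∧ ∀ τ : ℝ, 1 < τ →
      IntegrableOn (fun t : ℝ => t ^ b / ((t - τ ^ 2) ^ 2 + 4 * τ ^ 2) ^ (ν / 2))
        (Ioi 1) volume ∧
      (∫ t in Ioi (1 : ℝ), t ^ b / ((t - τ ^ 2) ^ 2 + 4 * τ ^ 2) ^ (ν / 2)) ≤
        C * τ ^ (1 - ν) := by
  set h : ℝ → ℝ := fun s => ((s ^ 2 + 4) ^ (ν / 2))⁻¹ with hh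
  have hν0 : 0 ≤ ν / 2 := by linarith
  have hint : Integrable h := by
    have h1 : Integrable (fun s : ℝ => ((1:ℝ) + ‖s‖ ^ 2) ^ (-ν / 2)) :=
      integrable_rpow_neg_one_add_norm_sq (by simpa using hν)
    refine h1.mono' ?_ (Eventually.of_forall fun s => ?_)
    · apply Measurable.aestronglyMeasurable
      fun_prop (disch := intro s; positivity)
    · rw [norm_inv, norm_eq_abs, abs_of_nonneg (by positivity), Real.norm_eq_abs, sq_abs,
        neg_div, Real.rpow_neg (by positivity : (0:ℝ) ≤ 1 + s ^ 2)]
      exact inv_anti₀ (by positivity)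
        (Real.rpow_le_rpow (by positivity) (by nlinarith) hν0)
  set K : ℝ := ∫ s : ℝ, h s with hK
  have hK0 : 0 ≤ K := integral_nonneg fun s => by positivity
  refine ⟨K + 1, by linarith, fun τ hτ => ?_⟩
  have hτ0 : (0 : ℝ) < τ := lt_trans one_pos hτ
  -- key pointwise identity
  have hiden : ∀ t : ℝ, (((t - τ ^ 2) ^ 2 + 4 * τ ^ 2) ^ (ν / 2))⁻¹
      = τ ^ (-ν) * h ((t - τ ^ 2) / τ) := by
    intro t
    have h2 : ((t - τ ^ 2) / τ) ^ 2 + 4 = ((t - τ ^ 2) ^ 2 + 4 * τ ^ 2) / τ ^ 2 := by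
      field_simp
    have hτν : ((τ : ℝ) ^ 2) ^ (ν / 2) = τ ^ ν := by
      rw [← Real.rpow_natCast τ 2, ← Real.rpow_mul hτ0.le]
      congr 1
      push_cast
      ring
    rw [hh]
    simp only []
    rw [h2, Real.div_rpow (by positivity) (by positivity), hτν,
      Real.rpow_neg hτ0.le]
    field_simp
  set g : ℝ → ℝ := fun t => τ ^ (-ν) * h ((t - τ ^ 2) / τ) with hg
  have hgint : Integrable g := ((hint.comp_div hτ0.ne').comp_sub_right (τ ^ 2)).const_mul _
  have hgnn : ∀ t, 0 ≤ g t := fun t => by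
    rw [hg]; dsimp only; positivity
  have hfg : ∀ t ∈ Ioi (1:ℝ), t ^ b / ((t - τ ^ 2) ^ 2 + 4 * τ ^ 2) ^ (ν / 2) ≤ g t := by
    intro t ht
    have ht1 : (1:ℝ) ≤ t := le_of_lt ht
    rw [div_eq_mul_inv, hiden t]
    calc t ^ b * (τ ^ (-ν) * h ((t - τ ^ 2) / τ))
        ≤ 1 * (τ ^ (-ν) * h ((t - τ ^ 2) / τ)) := by
          apply mul_le_mul_of_nonneg_right
            (Real.rpow_le_one_of_one_le_of_nonpos ht1 hb.le)
          have := hgnn t; rw [hg] at this; exact this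
      _ = g t := by rw [one_mul, hg]
  have hfm : AEStronglyMeasurable
      (fun t : ℝ => t ^ b / ((t - τ ^ 2) ^ 2 + 4 * τ ^ 2) ^ (ν / 2))
      (volume.restrict (Ioi 1)) := by
    apply Measurable.aestronglyMeasurable
    apply Measurable.div
    · fun_prop
    · fun_prop (disch := intro t; positivity)
  have hfnn : ∀ t ∈ Ioi (1:ℝ),
      0 ≤ t ^ b / ((t - τ ^ 2) ^ 2 + 4 * τ ^ 2) ^ (ν / 2) := by
    intro t ht
    have : (0:ℝ) < t := lt_trans one_pos ht
    positivity
  have hfint : IntegrableOn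
      (fun t : ℝ => t ^ b / ((t - τ ^ 2) ^ 2 + 4 * τ ^ 2) ^ (ν / 2)) (Ioi 1) := by
    refine (hgint.integrableOn.mono' hfm ?_)
    filter_upwards [ae_restrict_mem measurableSet_Ioi] with t ht
    rw [Real.norm_eq_abs, abs_of_nonneg (hfnn t ht)]
    exact hfg t ht
  refine ⟨hfint, ?_⟩
  have hIg : ∫ t : ℝ, g t = τ ^ (1 - ν) * K := by
    rw [hg]
    simp only []
    rw [integral_const_mul, integral_sub_right_eq_self (fun t => h (t / τ)) (τ^2),
      MeasureTheory.Measure.integral_comp_div h τ, smul_eq_mul, abs_of_pos hτ0, ← hK,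
      ← mul_assoc, Real.rpow_sub hτ0, Real.rpow_one, Real.rpow_neg hτ0.le]
    ring_nf
  calc (∫ t in Ioi (1:ℝ), t ^ b / ((t - τ ^ 2) ^ 2 + 4 * τ ^ 2) ^ (ν / 2))
      ≤ ∫ t in Ioi (1:ℝ), g t := by
        apply setIntegral_mono_on hfint hgint.integrableOn measurableSet_Ioi hfg
    _ ≤ ∫ t : ℝ, g t := setIntegral_le_integral hgint (Eventually.of_forall hgnn)
    _ = τ ^ (1 - ν) * K := hIg
    _ ≤ (K + 1) * τ ^ (1 - ν) := by
        rw [mul_comm]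
        exact mul_le_mul_of_nonneg_right (by linarith) (Real.rpow_nonneg hτ0.le _)
end

section
/- Let n ≥ 1 be an integer, c̃ > 0, A > 0, ν ≥ 0, and let μ be a real number with μ < −1. Let (λ_j)_{j≥1} be a sequence of nonnegative real numbers satisfying |√(λ_j) − c̃ j^{1/n}| ≤ A for all j ≥ 1. Then there exists a constant C > 0, depending only on n, μ, ν, c̃, A, such that for every τ > 1, with λ = (τ + i)², Σ_{j≥1} j^μ / |λ − λ_j|^ν ≤ C τ^{−ν}. -/
open Complex

/-- Case (c) of the main series estimate: if the sequence `(λ_j)_{j≥1}` of nonnegative reals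
satisfies the Weyl gap bound `|√(λ_j) − c̃ j^{1/n}| ≤ A`, and `μ < −1`, then for `τ > 1`
and `λ = (τ + i)²` one has `Σ_{j≥1} j^μ / |λ − λ_j|^ν ≤ C τ^{−ν}`.
Here `lam j` stands for `λ_{j+1}`, so that the sequence is indexed from `1`. -/
theorem series_estimate_case_c (n : ℕ) (hn : 1 ≤ n) (ctil A ν μ : ℝ)
    (hctil : 0 < ctil) (hA : 0 < A) (hν : 0 ≤ ν) (hμ : μ < -1)
    (lam : ℕ → ℝ) (hlam0 : ∀ j : ℕ, 0 ≤ lam j)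
    (hweyl : ∀ j : ℕ, |Real.sqrt (lam j) - ctil * ((j : ℝ) + 1) ^ (1 / (n : ℝ))| ≤ A) :
    ∃ C : ℝ, 0 < C ∧ ∀ τ : ℝ, 1 < τ →
      Summable (fun j : ℕ =>
        ((j : ℝ) + 1) ^ μ / ‖((τ : ℂ) + Complex.I) ^ 2 - ((lam j : ℝ) : ℂ)‖ ^ ν) ∧
      (∑' j : ℕ,
        ((j : ℝ) + 1) ^ μ / ‖((τ : ℂ) + Complex.I) ^ 2 - ((lam j : ℝ) : ℂ)‖ ^ ν) ≤
        C * τ ^ (-ν) := by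
  -- The series Σ (j+1)^μ converges
  have hS : Summable (fun j : ℕ => ((j : ℝ) + 1) ^ μ) := by
    have := (Real.summable_nat_rpow (p := μ)).2 hμ
    have h2 := (summable_nat_add_iff (f := fun j : ℕ => ((j : ℝ)) ^ μ) 1).2 this
    convert h2 using 2 with j
    push_cast
    rfl
    push_cast
    rfl
  set S : ℝ := ∑' j : ℕ, ((j : ℝ) + 1) ^ μ with hSdef
  have hS0 : 0 ≤ S := tsum_nonneg fun j => Real.rpow_nonneg (by positivity) _
  refine ⟨S + 1, by linarith, fun τ hτ => ?_⟩
  have hτ0 : 0 < τ := by linarith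
  -- pointwise lower bound on the denominator
  have habs : ∀ j : ℕ, τ ≤ ‖((τ : ℂ) + Complex.I) ^ 2 - ((lam j : ℝ) : ℂ)‖ := by
    intro j
    have h1 : ((((τ : ℂ)) + Complex.I) ^ 2 - ((lam j : ℝ) : ℂ)).im = 2 * τ := by
      simp [sq]; ring
    have h2 := Complex.abs_im_le_norm ((((τ : ℂ)) + Complex.I) ^ 2 - ((lam j : ℝ) : ℂ))
    rw [h1, _root_.abs_of_nonneg (by linarith)] at h2
    linarith
  -- pointwise bound on the terms
  have hterm : ∀ j : ℕ,
      ((j : ℝ) + 1) ^ μ / ‖((τ : ℂ) + Complex.I) ^ 2 - ((lam j : ℝ) : ℂ)‖ ^ ν ≤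
      ((j : ℝ) + 1) ^ μ * τ ^ (-ν) := by
    intro j
    have hnum : 0 ≤ ((j : ℝ) + 1) ^ μ := Real.rpow_nonneg (by positivity) _
    have hpow : τ ^ ν ≤ ‖((τ : ℂ) + Complex.I) ^ 2 - ((lam j : ℝ) : ℂ)‖ ^ ν :=
      Real.rpow_le_rpow hτ0.le (habs j) hν
    have hτν : 0 < τ ^ ν := Real.rpow_pos_of_pos hτ0 ν
    calc ((j : ℝ) + 1) ^ μ / ‖((τ : ℂ) + Complex.I) ^ 2 - ((lam j : ℝ) : ℂ)‖ ^ ν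
        ≤ ((j : ℝ) + 1) ^ μ / τ ^ ν :=
          div_le_div_of_nonneg_left hnum hτν hpow |>.trans_eq rfl
      _ = ((j : ℝ) + 1) ^ μ * τ ^ (-ν) := by
          rw [Real.rpow_neg hτ0.le, div_eq_mul_inv]
  have hnn : ∀ j : ℕ,
      0 ≤ ((j : ℝ) + 1) ^ μ / ‖((τ : ℂ) + Complex.I) ^ 2 - ((lam j : ℝ) : ℂ)‖ ^ ν := by
    intro j
    have hnum : 0 ≤ ((j : ℝ) + 1) ^ μ := Real.rpow_nonneg (by positivity) _
    positivity
  have hS2 : Summable (fun j : ℕ => ((j : ℝ) + 1) ^ μ * τ ^ (-ν)) := hS.mul_right _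
  have hsum : Summable (fun j : ℕ =>
      ((j : ℝ) + 1) ^ μ / ‖((τ : ℂ) + Complex.I) ^ 2 - ((lam j : ℝ) : ℂ)‖ ^ ν) :=
    Summable.of_nonneg_of_le hnn hterm hS2
  refine ⟨hsum, ?_⟩
  have hτν' : 0 ≤ τ ^ (-ν) := (Real.rpow_pos_of_pos hτ0 _).le
  calc (∑' j : ℕ,
        ((j : ℝ) + 1) ^ μ / ‖((τ : ℂ) + Complex.I) ^ 2 - ((lam j : ℝ) : ℂ)‖ ^ ν)
      ≤ ∑' j : ℕ, ((j : ℝ) + 1) ^ μ * τ ^ (-ν) := Summable.tsum_le_tsum hterm hsum hS2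
    _ = S * τ ^ (-ν) := by rw [tsum_mul_right]
    _ ≤ (S + 1) * τ ^ (-ν) := by nlinarith
end

section
/- Let n ≥ 1 be an integer, c > 0, ν > 0, and let μ be a real number with −1 < μ < 2ν/n − 1. Let (λ_j)_{j≥1} be a sequence of real numbers with λ_j ≥ c j^{2/n} for all j ≥ 1. Then there exists a constant C > 0, depending only on n, μ, ν, c, such that for every λ ∈ ℂ with Re λ ≤ −1, the series Σ_{j≥1} j^μ / |λ − λ_j|^ν converges absolutely and satisfies Σ_{j≥1} j^μ / |λ − λ_j|^ν ≤ C |Re λ|^{(μ+1)n/2 − ν}. In particular, since (μ+1)n/2 − ν < 0, the sum is bounded by C uniformly over all such λ. -/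
open Complex

private lemma sumA {μ : ℝ} (hμ : -1 < μ) (K : ℕ) :
    ∑ m ∈ Finset.range K, ((m : ℝ) + 1) ^ μ ≤ (1 + 1 / (μ + 1)) * (K : ℝ) ^ (μ + 1) := by
  have hμ1 : 0 < μ + 1 := by linarith
  have hC1 : (1 : ℝ) ≤ 1 + 1 / (μ + 1) := by
    have : 0 < 1 / (μ + 1) := by positivity
    linarith
  rcases Nat.eq_zero_or_pos K with hK | hK
  · subst hK; simp [Real.zero_rpow (ne_of_gt hμ1)]
  have hK0 : (0 : ℝ) < K := by exact_mod_cast hK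
  rcases le_or_gt 0 μ with hμ0 | hμ0
  · -- μ ≥ 0 : each term ≤ K^μ
    have h1 : ∑ m ∈ Finset.range K, ((m : ℝ) + 1) ^ μ ≤ (K : ℝ) * (K : ℝ) ^ μ := by
      calc ∑ m ∈ Finset.range K, ((m : ℝ) + 1) ^ μ
          ≤ ∑ _m ∈ Finset.range K, (K : ℝ) ^ μ := by
            apply Finset.sum_le_sum
            intro m hm
            have : (m : ℝ) + 1 ≤ (K : ℝ) := by
              have := Finset.mem_range.1 hm
              exact_mod_cast Nat.succ_le_of_lt this
            exact Real.rpow_le_rpow (by positivity) this hμ0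
        _ = (K : ℝ) * (K : ℝ) ^ μ := by
            rw [Finset.sum_const, Finset.card_range, nsmul_eq_mul]
    have h2 : (K : ℝ) * (K : ℝ) ^ μ = (K : ℝ) ^ (μ + 1) := by
      rw [Real.rpow_add_one (ne_of_gt hK0)]; ring
    rw [h2] at h1
    have hpos : 0 ≤ (K : ℝ) ^ (μ + 1) := by positivity
    nlinarith
  · -- -1 < μ < 0 : integral comparison
    obtain ⟨a, rfl⟩ : ∃ a, K = a + 1 := ⟨K - 1, (Nat.succ_pred_eq_of_pos hK).symm⟩
    have hanti : AntitoneOn (fun x : ℝ => x ^ μ) (Set.Icc (1 : ℝ) (1 + a)) := by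
      intro x hx y hy hxy
      exact Real.rpow_le_rpow_of_nonpos (lt_of_lt_of_le one_pos hx.1) hxy (le_of_lt hμ0)
    have hint := hanti.sum_le_integral
    have hI : (∫ x in (1:ℝ)..(1 + (a:ℕ)), x ^ μ) = ((1 + (a:ℝ)) ^ (μ + 1) - 1) / (μ + 1) := by
      rw [integral_rpow (Or.inl hμ)]
      norm_num
    have hsum : ∑ m ∈ Finset.range (a + 1), ((m : ℝ) + 1) ^ μ
        = 1 + ∑ i ∈ Finset.range a, ((1 : ℝ) + ((i + 1 : ℕ) : ℝ)) ^ μ := by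
      rw [Finset.sum_range_succ']
      push_cast
      rw [show ((0:ℝ)+1) ^ μ = 1 by norm_num, add_comm]
      congr 1
      exact Finset.sum_congr rfl fun x _ => by congr 1; ring
    rw [hsum]
    have hKc : ((a + 1 : ℕ) : ℝ) = 1 + (a : ℝ) := by push_cast; ring
    rw [hKc]
    set X := (1 + (a:ℝ)) ^ (μ + 1) with hX
    have h1 : (1 : ℝ) ≤ X :=
      Real.one_le_rpow (by linarith [Nat.cast_nonneg (α := ℝ) a]) (le_of_lt hμ1)
    have h2 : ∑ i ∈ Finset.range a, ((1 : ℝ) + ((i + 1 : ℕ) : ℝ)) ^ μ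
        ≤ (X - 1) / (μ + 1) := by
      rw [← hI]; exact hint
    have hfin : (1 + 1 / (μ + 1)) * X = X + X / (μ + 1) := by ring
    have h3 : (X - 1) / (μ + 1) ≤ X / (μ + 1) := by gcongr; linarith
    linarith [h2.trans h3]

private lemma tailB {s : ℝ} (hs : 1 < s) {K : ℕ} (hK : 1 ≤ K) :
    ∑' k : ℕ, ((K : ℝ) + ((k + 1 : ℕ) : ℝ)) ^ (-s) ≤ (K : ℝ) ^ (1 - s) / (s - 1) := by
  have hK0 : (1 : ℝ) ≤ (K : ℝ) := by exact_mod_cast hK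
  apply Real.tsum_le_of_sum_range_le (fun n => by positivity)
  intro N
  have hanti : AntitoneOn (fun x : ℝ => x ^ (-s)) (Set.Icc ((K : ℝ)) ((K : ℝ) + N)) := by
    intro x hx y hy hxy
    exact Real.rpow_le_rpow_of_nonpos (lt_of_lt_of_le one_pos (le_trans hK0 hx.1)) hxy
      (by linarith)
  have hint := hanti.sum_le_integral
  have h0 : (0:ℝ) ∉ Set.uIcc ((K:ℝ)) ((K:ℝ) + N) := by
    rw [Set.uIcc_of_le (by linarith [Nat.cast_nonneg (α := ℝ) N])]
    intro h
    have := h.1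
    linarith
  have hI : (∫ x in ((K:ℝ))..((K:ℝ) + N), x ^ (-s))
      = (((K:ℝ) + N) ^ (-s + 1) - (K:ℝ) ^ (-s + 1)) / (-s + 1) := by
    rw [integral_rpow (Or.inr ⟨by linarith, h0⟩)]
  calc ∑ i ∈ Finset.range N, ((K : ℝ) + ((i + 1 : ℕ) : ℝ)) ^ (-s)
      ≤ ∫ x in ((K:ℝ))..((K:ℝ) + N), x ^ (-s) := hint
    _ = (((K:ℝ) + N) ^ (-s + 1) - (K:ℝ) ^ (-s + 1)) / (-s + 1) := hI
    _ = ((K:ℝ) ^ (1 - s) - ((K:ℝ) + N) ^ (1 - s)) / (s - 1) := by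
        rw [show -s + 1 = 1 - s by ring]
        rw [div_eq_div_iff (by linarith) (by linarith)]
        ring
    _ ≤ (K : ℝ) ^ (1 - s) / (s - 1) := by
        have hB : (0:ℝ) ≤ ((K:ℝ) + (N:ℝ)) ^ (1 - s) := by positivity
        exact (div_le_div_iff_of_pos_right (by linarith)).mpr (by linarith)


private lemma mainReal (p ν μ c : ℝ) (hp : 0 < p) (hν : 0 < ν) (hμ1 : -1 < μ)
    (hsν : μ - p * ν < -1) (hc : 0 < c) :
    ∃ C : ℝ, 0 < C ∧ ∀ t : ℝ, 1 ≤ t →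
      Summable (fun k : ℕ => ((k : ℝ) + 1) ^ μ / (t + c * ((k : ℝ) + 1) ^ p) ^ ν) ∧
      (∑' k : ℕ, ((k : ℝ) + 1) ^ μ / (t + c * ((k : ℝ) + 1) ^ p) ^ ν)
        ≤ C * t ^ ((μ + 1) / p - ν) := by
  set s : ℝ := p * ν - μ with hsdef
  have hs1 : 1 < s := by simp only [hsdef]; linarith
  have hμp : (0:ℝ) < μ + 1 := by linarith
  have hCpos : (0:ℝ) < (1 + 1 / (μ + 1)) * 2 ^ (μ + 1) + c ^ (-ν) / (s - 1) := by
    have h1 : (0:ℝ) < 1 / (μ + 1) := div_pos one_pos hμp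
    have h2 : (0:ℝ) < (2:ℝ) ^ (μ + 1) := Real.rpow_pos_of_pos two_pos _
    have h3 : (0:ℝ) < c ^ (-ν) / (s - 1) :=
      div_pos (Real.rpow_pos_of_pos hc _) (by linarith)
    nlinarith
  refine ⟨(1 + 1 / (μ + 1)) * 2 ^ (μ + 1) + c ^ (-ν) / (s - 1), hCpos, ?_⟩
  intro t ht
  have ht0 : (0 : ℝ) < t := lt_of_lt_of_le one_pos ht
  set g : ℕ → ℝ := fun k => ((k : ℝ) + 1) ^ μ / (t + c * ((k : ℝ) + 1) ^ p) ^ ν with hg_def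
  have hgpos : ∀ k, 0 ≤ g k := fun k => by simp only [hg_def]; positivity
  -- pointwise bound B
  have hgB : ∀ k : ℕ, g k ≤ c ^ (-ν) * ((k : ℝ) + 1) ^ (-s) := by
    intro k
    have hx0 : (0 : ℝ) < (k : ℝ) + 1 := by positivity
    have h1 : c ^ ν * ((k : ℝ) + 1) ^ (p * ν) ≤ (t + c * ((k : ℝ) + 1) ^ p) ^ ν := by
      rw [Real.rpow_mul hx0.le, ← Real.mul_rpow hc.le (by positivity)]
      exact Real.rpow_le_rpow (by positivity) (by nlinarith [Real.rpow_pos_of_pos hx0 p]) hν.le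
    have h2 : g k ≤ ((k : ℝ) + 1) ^ μ / (c ^ ν * ((k : ℝ) + 1) ^ (p * ν)) := by
      simp only [hg_def]
      gcongr
    have h3 : ((k : ℝ) + 1) ^ μ / (c ^ ν * ((k : ℝ) + 1) ^ (p * ν))
        = c ^ (-ν) * ((k : ℝ) + 1) ^ (-s) := by
      rw [Real.rpow_neg hc.le, show -s = μ - p * ν by simp [hsdef],
        Real.rpow_sub hx0]
      ring
    rw [h3] at h2
    exact h2
  -- summability
  have hsum0 : Summable (fun k : ℕ => ((k : ℝ) + 1) ^ (-s)) := by
    have h := Real.summable_nat_rpow.2 (show -s < -1 by linarith)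
    have h' := (summable_nat_add_iff (f := fun n : ℕ => (n : ℝ) ^ (-s)) 1).2 h
    simpa using h'
  have hg : Summable g :=
    Summable.of_nonneg_of_le hgpos hgB (hsum0.mul_left _)
  refine ⟨hg, ?_⟩
  -- the split point
  set K : ℕ := ⌈t ^ (1 / p)⌉₊ with hKdef
  have hx1 : (1 : ℝ) ≤ t ^ (1 / p) := Real.one_le_rpow ht (by positivity)
  have hKl : t ^ (1 / p) ≤ (K : ℝ) := Nat.le_ceil _
  have hKu : (K : ℝ) ≤ 2 * t ^ (1 / p) := by
    have h := Nat.ceil_lt_add_one (show (0:ℝ) ≤ t ^ (1/p) by positivity)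
    have : (K : ℝ) < t ^ (1 / p) + 1 := h
    linarith
  have hK1 : 1 ≤ K := Nat.ceil_pos.mpr (by positivity)
  -- part A
  have hA : ∑ i ∈ Finset.range K, g i
      ≤ (1 + 1 / (μ + 1)) * 2 ^ (μ + 1) * t ^ ((μ + 1) / p - ν) := by
    have hgA : ∀ i : ℕ, g i ≤ ((i : ℝ) + 1) ^ μ * t ^ (-ν) := by
      intro i
      have hx0 : (0 : ℝ) < (i : ℝ) + 1 := by positivity
      have hd : t ^ ν ≤ (t + c * ((i : ℝ) + 1) ^ p) ^ ν :=
        Real.rpow_le_rpow ht0.le (by nlinarith [Real.rpow_pos_of_pos hx0 p]) hν.le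
      have h1 : g i ≤ ((i : ℝ) + 1) ^ μ / t ^ ν := by
        simp only [hg_def]
        gcongr
      rwa [div_eq_mul_inv, ← Real.rpow_neg ht0.le] at h1
    have hKp : (K : ℝ) ^ (μ + 1) ≤ 2 ^ (μ + 1) * t ^ ((μ + 1) / p) := by
      have h1 : (K : ℝ) ^ (μ + 1) ≤ (2 * t ^ (1 / p)) ^ (μ + 1) :=
        Real.rpow_le_rpow (Nat.cast_nonneg K) hKu (by linarith)
      rwa [Real.mul_rpow (by norm_num) (by positivity), ← Real.rpow_mul ht0.le,
        show 1 / p * (μ + 1) = (μ + 1) / p by ring] at h1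
    calc ∑ i ∈ Finset.range K, g i
        ≤ ∑ i ∈ Finset.range K, ((i : ℝ) + 1) ^ μ * t ^ (-ν) :=
          Finset.sum_le_sum fun i _ => hgA i
      _ = (∑ i ∈ Finset.range K, ((i : ℝ) + 1) ^ μ) * t ^ (-ν) := by
          rw [Finset.sum_mul]
      _ ≤ ((1 + 1 / (μ + 1)) * (K : ℝ) ^ (μ + 1)) * t ^ (-ν) := by
          have := sumA hμ1 K
          have h2 : (0:ℝ) ≤ t ^ (-ν) := by positivity
          exact mul_le_mul_of_nonneg_right this h2
      _ ≤ ((1 + 1 / (μ + 1)) * (2 ^ (μ + 1) * t ^ ((μ + 1) / p))) * t ^ (-ν) := by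
          have hC1 : (0:ℝ) ≤ 1 + 1 / (μ + 1) := by
            have h1 : (0:ℝ) < 1 / (μ + 1) := div_pos one_pos hμp
            linarith
          have h2 : (0:ℝ) ≤ t ^ (-ν) := by positivity
          exact mul_le_mul_of_nonneg_right
            (mul_le_mul_of_nonneg_left hKp hC1) h2
      _ = (1 + 1 / (μ + 1)) * 2 ^ (μ + 1) * (t ^ ((μ + 1) / p) * t ^ (-ν)) := by ring
      _ = (1 + 1 / (μ + 1)) * 2 ^ (μ + 1) * t ^ ((μ + 1) / p - ν) := by
          rw [← Real.rpow_add ht0, show (μ + 1) / p + -ν = (μ + 1) / p - ν by ring]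
  -- part B
  have hBpt : ∀ i : ℕ, g (i + K) ≤ c ^ (-ν) * ((K : ℝ) + ((i + 1 : ℕ) : ℝ)) ^ (-s) := by
    intro i
    have := hgB (i + K)
    have hcast : ((i + K : ℕ) : ℝ) + 1 = (K : ℝ) + ((i + 1 : ℕ) : ℝ) := by push_cast; ring
    rwa [hcast] at this
  have hsum2 : Summable (fun i : ℕ => ((K : ℝ) + ((i + 1 : ℕ) : ℝ)) ^ (-s)) := by
    apply Summable.of_nonneg_of_le (fun i => by positivity) (fun i => ?_) hsum0
    apply Real.rpow_le_rpow_of_nonpos (by positivity) _ (by linarith)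
    have : (0:ℝ) ≤ (K : ℝ) := Nat.cast_nonneg K
    push_cast
    linarith
  have hB : (∑' i : ℕ, g (i + K)) ≤ c ^ (-ν) / (s - 1) * t ^ ((μ + 1) / p - ν) := by
    have hsum1 : Summable (fun i : ℕ => g (i + K)) := (summable_nat_add_iff K).2 hg
    have hKt : (K : ℝ) ^ (1 - s) ≤ t ^ ((μ + 1) / p - ν) := by
      have h1 : (K : ℝ) ^ (1 - s) ≤ (t ^ (1 / p)) ^ (1 - s) :=
        Real.rpow_le_rpow_of_nonpos (by positivity) hKl (by linarith)
      rwa [← Real.rpow_mul ht0.le,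
        show 1 / p * (1 - s) = (μ + 1) / p - ν by
          simp only [hsdef]; field_simp; ring] at h1
    calc (∑' i : ℕ, g (i + K))
        ≤ ∑' i : ℕ, c ^ (-ν) * ((K : ℝ) + ((i + 1 : ℕ) : ℝ)) ^ (-s) :=
          Summable.tsum_le_tsum hBpt hsum1 (hsum2.mul_left _)
      _ = c ^ (-ν) * ∑' i : ℕ, ((K : ℝ) + ((i + 1 : ℕ) : ℝ)) ^ (-s) := tsum_mul_left
      _ ≤ c ^ (-ν) * ((K : ℝ) ^ (1 - s) / (s - 1)) :=
          mul_le_mul_of_nonneg_left (tailB hs1 hK1) (by positivity)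
      _ ≤ c ^ (-ν) * (t ^ ((μ + 1) / p - ν) / (s - 1)) := by
          gcongr <;> first | exact hKt | linarith
      _ = c ^ (-ν) / (s - 1) * t ^ ((μ + 1) / p - ν) := by ring
  have hsplit := Summable.sum_add_tsum_nat_add (f := g) K hg
  calc (∑' k : ℕ, g k) = ∑ i ∈ Finset.range K, g i + ∑' i : ℕ, g (i + K) := hsplit.symm
    _ ≤ (1 + 1 / (μ + 1)) * 2 ^ (μ + 1) * t ^ ((μ + 1) / p - ν)
        + c ^ (-ν) / (s - 1) * t ^ ((μ + 1) / p - ν) := add_le_add hA hB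
    _ = ((1 + 1 / (μ + 1)) * 2 ^ (μ + 1) + c ^ (-ν) / (s - 1)) * t ^ ((μ + 1) / p - ν) := by
        ring

/-- The second series lemma: if `λ_j ≥ c j^{2/n}` and `−1 < μ < 2ν/n − 1`, `ν > 0`, then
for every `λ ∈ ℂ` with `Re λ ≤ −1` the series `Σ_{j≥1} j^μ / |λ − λ_j|^ν` converges
absolutely and is bounded by `C |Re λ|^{(μ+1)n/2 − ν}`; in particular (since the exponent is
negative) it is bounded by `C` uniformly.  Here `lam j` stands for `λ_{j+1}`, so that the
sequence is indexed from `1`. -/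
theorem series_estimate_left_halfplane (n : ℕ) (hn : 1 ≤ n) (c ν μ : ℝ)
    (hc : 0 < c) (hν : 0 < ν) (hμ1 : -1 < μ) (hμ2 : μ < 2 * ν / (n : ℝ) - 1)
    (lam : ℕ → ℝ) (hlam : ∀ j : ℕ, c * ((j : ℝ) + 1) ^ (2 / (n : ℝ)) ≤ lam j) :
    ∃ C : ℝ, 0 < C ∧ ∀ l : ℂ, l.re ≤ -1 →
      Summable (fun j : ℕ =>
        ((j : ℝ) + 1) ^ μ / ‖l - ((lam j : ℝ) : ℂ)‖ ^ ν) ∧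
      (∑' j : ℕ, ((j : ℝ) + 1) ^ μ / ‖l - ((lam j : ℝ) : ℂ)‖ ^ ν) ≤
        C * |l.re| ^ ((μ + 1) * (n : ℝ) / 2 - ν) ∧
      (∑' j : ℕ, ((j : ℝ) + 1) ^ μ / ‖l - ((lam j : ℝ) : ℂ)‖ ^ ν) ≤ C := by
  have hn0 : (0 : ℝ) < (n : ℝ) := by exact_mod_cast hn
  set p : ℝ := 2 / (n : ℝ) with hpdef
  have hp : 0 < p := by positivity
  have hpν : p * ν = 2 * ν / (n : ℝ) := by rw [hpdef]; ring
  have hsν : μ - p * ν < -1 := by rw [hpν]; linarith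
  have hexp : (μ + 1) / p = (μ + 1) * (n : ℝ) / 2 := by
    rw [hpdef]; field_simp
  obtain ⟨C, hC, hmain⟩ := mainReal p ν μ c hp hν hμ1 hsν hc
  refine ⟨C, hC, ?_⟩
  intro l hl
  set t : ℝ := -l.re with htdef
  have ht : 1 ≤ t := by rw [htdef]; linarith
  have ht0 : (0 : ℝ) < t := lt_of_lt_of_le one_pos ht
  obtain ⟨hgsum, hgbound⟩ := hmain t ht
  have hpt : ∀ j : ℕ, ((j : ℝ) + 1) ^ μ / ‖l - ((lam j : ℝ) : ℂ)‖ ^ ν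
      ≤ ((j : ℝ) + 1) ^ μ / (t + c * ((j : ℝ) + 1) ^ p) ^ ν := by
    intro j
    have hxp : (0 : ℝ) < c * ((j : ℝ) + 1) ^ p := by positivity
    have hd1 : (0 : ℝ) < t + c * ((j : ℝ) + 1) ^ p := by linarith
    have hden : t + c * ((j : ℝ) + 1) ^ p ≤ ‖l - ((lam j : ℝ) : ℂ)‖ := by
      have h1 : |(l - ((lam j : ℝ) : ℂ)).re| ≤ ‖l - ((lam j : ℝ) : ℂ)‖ :=
        Complex.abs_re_le_norm _
      have h2 : (l - ((lam j : ℝ) : ℂ)).re = l.re - lam j := by simp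
      have h3 : lam j - l.re ≤ |l.re - lam j| := by rw [abs_sub_comm]; exact le_abs_self _
      have h4 := hlam j
      rw [h2] at h1
      have h5 : t + c * ((j : ℝ) + 1) ^ p ≤ lam j - l.re := by
        rw [htdef]; linarith
      linarith
    have h4 : (t + c * ((j : ℝ) + 1) ^ p) ^ ν ≤ ‖l - ((lam j : ℝ) : ℂ)‖ ^ ν :=
      Real.rpow_le_rpow hd1.le hden hν.le
    exact div_le_div_of_nonneg_left (by positivity) (Real.rpow_pos_of_pos hd1 ν) h4
  have hfsum : Summable (fun j : ℕ =>
      ((j : ℝ) + 1) ^ μ / ‖l - ((lam j : ℝ) : ℂ)‖ ^ ν) :=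
    Summable.of_nonneg_of_le (fun j => by positivity) hpt hgsum
  have htsum : (∑' j : ℕ, ((j : ℝ) + 1) ^ μ / ‖l - ((lam j : ℝ) : ℂ)‖ ^ ν)
      ≤ ∑' k : ℕ, ((k : ℝ) + 1) ^ μ / (t + c * ((k : ℝ) + 1) ^ p) ^ ν :=
    Summable.tsum_le_tsum hpt hfsum hgsum
  have habs : |l.re| = t := by rw [htdef, abs_of_nonpos (by linarith)]
  have hbound1 : (∑' j : ℕ, ((j : ℝ) + 1) ^ μ / ‖l - ((lam j : ℝ) : ℂ)‖ ^ ν)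
      ≤ C * |l.re| ^ ((μ + 1) * (n : ℝ) / 2 - ν) := by
    rw [habs, ← hexp]
    exact le_trans htsum hgbound
  refine ⟨hfsum, hbound1, ?_⟩
  have hexp0 : (μ + 1) * (n : ℝ) / 2 - ν ≤ 0 := by
    rw [← hexp, sub_nonpos, div_le_iff₀ hp]
    nlinarith
  have h6 : |l.re| ^ ((μ + 1) * (n : ℝ) / 2 - ν) ≤ 1 :=
    Real.rpow_le_one_of_one_le_of_nonpos (by rw [habs]; exact ht) hexp0
  calc (∑' j : ℕ, ((j : ℝ) + 1) ^ μ / ‖l - ((lam j : ℝ) : ℂ)‖ ^ ν)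
      ≤ C * |l.re| ^ ((μ + 1) * (n : ℝ) / 2 - ν) := hbound1
    _ ≤ C * 1 := mul_le_mul_of_nonneg_left h6 hC.le
    _ = C := mul_one C
end

section
/- Let n ≥ 1 be an integer, c̃ > 0, A > 0, μ ∈ ℝ and ν ≥ 0. Let (λ_j)_{j≥1} be a sequence of nonnegative real numbers satisfying |√(λ_j) − c̃ j^{1/n}| ≤ A for all j ≥ 1. Then there exist constants C > 0 and τ₀ ≥ 1, depending only on n, μ, ν, c̃, A, such that for every τ ≥ τ₀: Σ_{j : τ − 2A ≤ √(λ_j) ≤ τ + 2A} j^μ / ((τ² − λ_j)² + 4τ²)^{ν/2} ≤ C τ^{n − 1 + nμ − ν}. -/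
open Complex

private lemma pow_sub_pow_le_aux (x y : ℝ) (hy : 0 ≤ y) (hxy : y ≤ x) :
    ∀ m : ℕ, x ^ (m + 1) - y ^ (m + 1) ≤ ((m : ℝ) + 1) * x ^ m * (x - y) := by
  intro m
  induction m with
  | zero => simp
  | succ k ih =>
    have hx : 0 ≤ x := le_trans hy hxy
    have h2 : x * (x ^ (k + 1) - y ^ (k + 1)) ≤ x * (((k : ℝ) + 1) * x ^ k * (x - y)) :=
      mul_le_mul_of_nonneg_left ih hx
    have h3 : (x - y) * y ^ (k + 1) ≤ (x - y) * x ^ (k + 1) :=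
      mul_le_mul_of_nonneg_left (pow_le_pow_left₀ hy hxy _) (by linarith)
    have h1 : x ^ (k + 1 + 1) - y ^ (k + 1 + 1)
        = x * (x ^ (k + 1) - y ^ (k + 1)) + (x - y) * y ^ (k + 1) := by ring
    calc x ^ (k + 1 + 1) - y ^ (k + 1 + 1)
        = x * (x ^ (k + 1) - y ^ (k + 1)) + (x - y) * y ^ (k + 1) := h1
      _ ≤ x * (((k : ℝ) + 1) * x ^ k * (x - y)) + (x - y) * x ^ (k + 1) := by linarith
      _ = ((↑(k + 1) : ℝ) + 1) * x ^ (k + 1) * (x - y) := by push_cast; ring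

set_option maxHeartbeats 1600000 in
/-- The middle-band estimate: if `(λ_j)_{j≥1}` is a nonnegative sequence satisfying the Weyl
gap bound `|√(λ_j) − c̃ j^{1/n}| ≤ A`, then the (finite) sum over the indices `j` with
`τ − 2A ≤ √(λ_j) ≤ τ + 2A` of `j^μ / ((τ² − λ_j)² + 4τ²)^{ν/2}` is at most
`C τ^{n − 1 + nμ − ν}` for all `τ ≥ τ₀`.
Here `lam j` stands for `λ_{j+1}`, so that the sequence is indexed from `1`. -/
theorem series_estimate_middle_band (n : ℕ) (hn : 1 ≤ n) (ctil A μ ν : ℝ)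
    (hctil : 0 < ctil) (hA : 0 < A) (hν : 0 ≤ ν)
    (lam : ℕ → ℝ) (hlam0 : ∀ j : ℕ, 0 ≤ lam j)
    (hweyl : ∀ j : ℕ, |Real.sqrt (lam j) - ctil * ((j : ℝ) + 1) ^ (1 / (n : ℝ))| ≤ A) :
    ∃ C τ₀ : ℝ, 0 < C ∧ 1 ≤ τ₀ ∧ ∀ τ : ℝ, τ₀ ≤ τ →
      Summable (Set.indicator
        {j : ℕ | τ - 2 * A ≤ Real.sqrt (lam j) ∧ Real.sqrt (lam j) ≤ τ + 2 * A}
        (fun j : ℕ => ((j : ℝ) + 1) ^ μ / ((τ ^ 2 - lam j) ^ 2 + 4 * τ ^ 2) ^ (ν / 2))) ∧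
      (∑' j : ℕ, Set.indicator
        {j : ℕ | τ - 2 * A ≤ Real.sqrt (lam j) ∧ Real.sqrt (lam j) ≤ τ + 2 * A}
        (fun j : ℕ => ((j : ℝ) + 1) ^ μ / ((τ ^ 2 - lam j) ^ 2 + 4 * τ ^ 2) ^ (ν / 2)) j) ≤
        C * τ ^ ((n : ℝ) - 1 + (n : ℝ) * μ - ν) := by
  have hn0 : (0 : ℝ) < (n : ℝ) := by exact_mod_cast hn
  have hnne : (n : ℝ) ≠ 0 := ne_of_gt hn0
  set K : ℝ := max ((2 / ctil) ^ ((n : ℝ) * μ)) ((1 / (2 * ctil)) ^ ((n : ℝ) * μ)) with hKdef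
  have hKpos : 0 < K :=
    lt_max_of_lt_left (Real.rpow_pos_of_pos (by positivity) _)
  set C₁ : ℝ := 6 * A / ctil * (n : ℝ) * (2 / ctil) ^ (n - 1) + 1 with hC₁def
  have hC₁pos : 0 < C₁ := by positivity
  clear_value K C₁
  have hKl : (2 / ctil) ^ ((n : ℝ) * μ) ≤ K := by rw [hKdef]; exact le_max_left _ _
  have hKr : (1 / (2 * ctil)) ^ ((n : ℝ) * μ) ≤ K := by rw [hKdef]; exact le_max_right _ _
  refine ⟨C₁ * K, 1 + 9 * A + ctil, by positivity, by nlinarith, ?_⟩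
  intro τ hτ
  have hτ1 : (1 : ℝ) ≤ τ := by nlinarith
  have hτpos : (0 : ℝ) < τ := by linarith
  have hτ6A : 6 * A ≤ τ := by nlinarith
  have hτ3A : 3 * A + ctil ≤ τ := by nlinarith
  set S : Set ℕ := {j : ℕ | τ - 2 * A ≤ Real.sqrt (lam j) ∧ Real.sqrt (lam j) ≤ τ + 2 * A}
    with hSdef
  set g : ℕ → ℝ :=
    fun j : ℕ => ((j : ℝ) + 1) ^ μ / ((τ ^ 2 - lam j) ^ 2 + 4 * τ ^ 2) ^ (ν / 2) with hgdef
  set α : ℝ := (τ - 3 * A) / ctil with hαdef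
  set β : ℝ := (τ + 3 * A) / ctil with hβdef
  clear_value S g α β
  have hα1 : (1 : ℝ) ≤ α := by rw [hαdef, le_div_iff₀ hctil]; nlinarith
  have hα0 : (0 : ℝ) ≤ α := by linarith
  have hαβ : α ≤ β := by
    rw [hαdef, hβdef]
    exact (div_le_div_iff_of_pos_right hctil).mpr (by linarith)
  have hβ0 : (0 : ℝ) ≤ β := le_trans hα0 hαβ
  have hβub : β ≤ 2 / ctil * τ := by
    have h : 2 / ctil * τ = (2 * τ) / ctil := by ring
    rw [hβdef, h]
    exact (div_le_div_iff_of_pos_right hctil).mpr (by linarith)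
  have hαlb : τ / (2 * ctil) ≤ α := by
    rw [hαdef, div_le_div_iff₀ (by positivity) hctil]; nlinarith
  -- the n-th power of (j+1)^(1/n) is j+1
  have hxn : ∀ j : ℕ, (((j : ℝ) + 1) ^ (1 / (n : ℝ))) ^ n = (j : ℝ) + 1 := by
    intro j
    have h0 : (0 : ℝ) ≤ (j : ℝ) + 1 := by positivity
    rw [← Real.rpow_natCast (((j : ℝ) + 1) ^ (1 / (n : ℝ))) n, ← Real.rpow_mul h0,
      one_div, inv_mul_cancel₀ hnne, Real.rpow_one]
  -- the window bounds on j+1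
  have hjub : ∀ j ∈ S, (j : ℝ) + 1 ≤ β ^ n := by
    intro j hj
    have hw := abs_le.mp (hweyl j)
    rw [hSdef] at hj
    simp only [Set.mem_setOf_eq] at hj
    have h1 : τ - 3 * A ≤ ctil * (((j : ℝ) + 1) ^ (1 / (n : ℝ))) := by
      linarith [hj.1, hw.1]
    have h2 : ctil * (((j : ℝ) + 1) ^ (1 / (n : ℝ))) ≤ τ + 3 * A := by
      linarith [hj.2, hw.2]
    have hxβ : ((j : ℝ) + 1) ^ (1 / (n : ℝ)) ≤ β := by
      rw [hβdef, le_div_iff₀ hctil]; linarith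
    have hx0 : (0 : ℝ) ≤ ((j : ℝ) + 1) ^ (1 / (n : ℝ)) :=
      Real.rpow_nonneg (by positivity) _
    calc (j : ℝ) + 1 = (((j : ℝ) + 1) ^ (1 / (n : ℝ))) ^ n := (hxn j).symm
      _ ≤ β ^ n := pow_le_pow_left₀ hx0 hxβ n
  have hjlb : ∀ j ∈ S, α ^ n ≤ (j : ℝ) + 1 := by
    intro j hj
    have hw := abs_le.mp (hweyl j)
    rw [hSdef] at hj
    simp only [Set.mem_setOf_eq] at hj
    have h1 : τ - 3 * A ≤ ctil * (((j : ℝ) + 1) ^ (1 / (n : ℝ))) := by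
      linarith [hj.1, hw.1]
    have hαx : α ≤ ((j : ℝ) + 1) ^ (1 / (n : ℝ)) := by
      rw [hαdef, div_le_iff₀ hctil]; linarith
    calc α ^ n ≤ (((j : ℝ) + 1) ^ (1 / (n : ℝ))) ^ n := pow_le_pow_left₀ hα0 hαx n
      _ = (j : ℝ) + 1 := hxn j
  -- the finite set containing the support
  set F : Finset ℕ := Finset.Icc ⌈α ^ n - 1⌉₊ ⌊β ^ n - 1⌋₊ with hFdef
  clear_value F
  have hSF : ∀ j ∈ S, j ∈ F := by
    intro j hj
    rw [hFdef, Finset.mem_Icc]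
    constructor
    · rw [Nat.ceil_le]; have := hjlb j hj; push_cast; linarith
    · have h1 : (1 : ℝ) ≤ α ^ n := one_le_pow₀ hα1
      have h2 := hjub j hj
      have h3 := hjlb j hj
      rw [Nat.le_floor_iff (by linarith)]
      push_cast; linarith
  have hsupp : ∀ j ∉ F, Set.indicator S g j = 0 := by
    intro j hj
    apply Set.indicator_of_notMem
    intro hjS; exact hj (hSF j hjS)
  -- cardinality bound
  have hα1n : (1 : ℝ) ≤ α ^ n := one_le_pow₀ hα1
  have hcard : (F.card : ℝ) ≤ β ^ n - α ^ n + 1 := by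
    have hba : α ^ n ≤ β ^ n := pow_le_pow_left₀ hα0 hαβ n
    rw [hFdef, Nat.card_Icc]
    rcases le_or_gt ⌈α ^ n - 1⌉₊ (⌊β ^ n - 1⌋₊ + 1) with h | h
    · rw [Nat.cast_sub h]
      have h1 : (⌊β ^ n - 1⌋₊ : ℝ) ≤ β ^ n - 1 := by
        apply Nat.floor_le; linarith
      have h2 : α ^ n - 1 ≤ (⌈α ^ n - 1⌉₊ : ℝ) := Nat.le_ceil _
      push_cast; linarith
    · rw [Nat.sub_eq_zero_of_le (le_of_lt h)]; push_cast; linarith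
  -- β^n - α^n ≤ n β^(n-1) (β - α)
  obtain ⟨m, hm⟩ : ∃ m, n = m + 1 := ⟨n - 1, (Nat.succ_pred_eq_of_pos hn).symm⟩
  have hgeom : β ^ n - α ^ n ≤ (n : ℝ) * β ^ (n - 1) * (β - α) := by
    rw [hm]
    simpa using pow_sub_pow_le_aux β α hα0 hαβ m
  have hβα : β - α = 6 * A / ctil := by
    rw [hαdef, hβdef]; field_simp; ring
  have hτn1 : (1 : ℝ) ≤ τ ^ (n - 1) := one_le_pow₀ hτ1
  have hcard2 : (F.card : ℝ) ≤ C₁ * τ ^ (n - 1) := by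
    have hβpow : β ^ (n - 1) ≤ (2 / ctil * τ) ^ (n - 1) := pow_le_pow_left₀ hβ0 hβub _
    have h1 : β ^ n - α ^ n ≤ (n : ℝ) * ((2 / ctil) ^ (n - 1) * τ ^ (n - 1)) * (6 * A / ctil) := by
      rw [← mul_pow]
      calc β ^ n - α ^ n ≤ (n : ℝ) * β ^ (n - 1) * (β - α) := hgeom
        _ ≤ (n : ℝ) * (2 / ctil * τ) ^ (n - 1) * (6 * A / ctil) := by
            rw [hβα]
            apply mul_le_mul_of_nonneg_right _ (by positivity)
            exact mul_le_mul_of_nonneg_left hβpow (by positivity)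
    have heq : C₁ * τ ^ (n - 1)
        = (n : ℝ) * ((2 / ctil) ^ (n - 1) * τ ^ (n - 1)) * (6 * A / ctil) + τ ^ (n - 1) := by
      rw [hC₁def]; ring
    calc (F.card : ℝ) ≤ β ^ n - α ^ n + 1 := hcard
      _ ≤ (n : ℝ) * ((2 / ctil) ^ (n - 1) * τ ^ (n - 1)) * (6 * A / ctil) + τ ^ (n - 1) := by
          linarith [h1, hτn1]
      _ = C₁ * τ ^ (n - 1) := heq.symm
  -- pointwise bound on the summand over S
  set B : ℝ := K * τ ^ ((n : ℝ) * μ - ν) with hBdef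
  clear_value B
  have hBnonneg : 0 ≤ B := by
    rw [hBdef]
    exact mul_nonneg (le_of_lt hKpos) (Real.rpow_nonneg (le_of_lt hτpos) _)
  have hterm : ∀ j ∈ S, g j ≤ B := by
    intro j hj
    have hx0 : (0 : ℝ) < (j : ℝ) + 1 := by positivity
    -- numerator bound
    have hnum : ((j : ℝ) + 1) ^ μ ≤ K * τ ^ ((n : ℝ) * μ) := by
      have hτnμ : (0 : ℝ) ≤ τ ^ ((n : ℝ) * μ) := Real.rpow_nonneg (le_of_lt hτpos) _
      rcases le_or_gt 0 μ with hμ | hμ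
      · have h1 : ((j : ℝ) + 1) ^ μ ≤ ((2 / ctil * τ) ^ n) ^ μ := by
          apply Real.rpow_le_rpow (le_of_lt hx0) _ hμ
          calc (j : ℝ) + 1 ≤ β ^ n := hjub j hj
            _ ≤ (2 / ctil * τ) ^ n := pow_le_pow_left₀ hβ0 hβub n
        have hb0 : (0 : ℝ) ≤ 2 / ctil * τ := by positivity
        have hc0 : (0 : ℝ) ≤ 2 / ctil := by positivity
        have h2 : ((2 / ctil * τ) ^ n) ^ μ = (2 / ctil) ^ ((n : ℝ) * μ) * τ ^ ((n : ℝ) * μ) := by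
          rw [← Real.rpow_natCast (2 / ctil * τ) n, ← Real.rpow_mul hb0,
            Real.mul_rpow hc0 (le_of_lt hτpos)]
        calc ((j : ℝ) + 1) ^ μ ≤ (2 / ctil) ^ ((n : ℝ) * μ) * τ ^ ((n : ℝ) * μ) := by
              rw [← h2]; exact h1
          _ ≤ K * τ ^ ((n : ℝ) * μ) :=
              mul_le_mul_of_nonneg_right hKl hτnμ
      · have hbase : (0 : ℝ) < (τ / (2 * ctil)) ^ n := by positivity
        have h1 : ((j : ℝ) + 1) ^ μ ≤ ((τ / (2 * ctil)) ^ n) ^ μ := by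
          apply Real.rpow_le_rpow_of_nonpos hbase _ (le_of_lt hμ)
          calc (τ / (2 * ctil)) ^ n ≤ α ^ n := pow_le_pow_left₀ (by positivity) hαlb n
            _ ≤ (j : ℝ) + 1 := hjlb j hj
        have heq2 : τ / (2 * ctil) = 1 / (2 * ctil) * τ := by ring
        have hb0 : (0 : ℝ) ≤ 1 / (2 * ctil) * τ := by positivity
        have hc0 : (0 : ℝ) ≤ 1 / (2 * ctil) := by positivity
        have h2 : ((τ / (2 * ctil)) ^ n) ^ μ
            = (1 / (2 * ctil)) ^ ((n : ℝ) * μ) * τ ^ ((n : ℝ) * μ) := by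
          rw [heq2, ← Real.rpow_natCast (1 / (2 * ctil) * τ) n, ← Real.rpow_mul hb0,
            Real.mul_rpow hc0 (le_of_lt hτpos)]
        calc ((j : ℝ) + 1) ^ μ ≤ (1 / (2 * ctil)) ^ ((n : ℝ) * μ) * τ ^ ((n : ℝ) * μ) := by
              rw [← h2]; exact h1
          _ ≤ K * τ ^ ((n : ℝ) * μ) :=
              mul_le_mul_of_nonneg_right hKr hτnμ
    -- denominator bound
    have hD : τ ^ ν ≤ ((τ ^ 2 - lam j) ^ 2 + 4 * τ ^ 2) ^ (ν / 2) := by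
      have h1 : τ ^ ν = (τ ^ 2) ^ (ν / 2) := by
        rw [← Real.rpow_natCast τ 2, ← Real.rpow_mul (le_of_lt hτpos)]
        have h2 : ((2 : ℕ) : ℝ) * (ν / 2) = ν := by push_cast; ring
        rw [h2]
      rw [h1]
      exact Real.rpow_le_rpow (by positivity) (by nlinarith [sq_nonneg (τ ^ 2 - lam j)])
        (by linarith)
    have hτν : (0 : ℝ) < τ ^ ν := Real.rpow_pos_of_pos hτpos _
    have hnum0 : (0 : ℝ) ≤ ((j : ℝ) + 1) ^ μ := Real.rpow_nonneg (le_of_lt hx0) _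
    calc g j = ((j : ℝ) + 1) ^ μ / ((τ ^ 2 - lam j) ^ 2 + 4 * τ ^ 2) ^ (ν / 2) := by
          rw [hgdef]
      _ ≤ (K * τ ^ ((n : ℝ) * μ)) / τ ^ ν :=
          div_le_div₀ (by positivity) hnum hτν hD
      _ = B := by
          rw [hBdef, Real.rpow_sub hτpos, mul_div_assoc]
  -- summability and the final bound
  have hsummable : Summable (Set.indicator S g) := summable_of_ne_finset_zero hsupp
  refine ⟨hsummable, ?_⟩
  rw [tsum_eq_sum hsupp]
  have hsum : ∑ j ∈ F, Set.indicator S g j ≤ F.card • B := by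
    apply Finset.sum_le_card_nsmul
    intro j _
    by_cases hjS : j ∈ S
    · rw [Set.indicator_of_mem hjS]; exact hterm j hjS
    · rw [Set.indicator_of_notMem hjS]; exact hBnonneg
  have hfinal : (F.card : ℝ) * B ≤ C₁ * K * τ ^ ((n : ℝ) - 1 + (n : ℝ) * μ - ν) := by
    have h1 : (F.card : ℝ) * B ≤ (C₁ * τ ^ (n - 1)) * B :=
      mul_le_mul_of_nonneg_right hcard2 hBnonneg
    have h2 : (C₁ * τ ^ (n - 1)) * B = C₁ * K * (τ ^ (n - 1) * τ ^ ((n : ℝ) * μ - ν)) := by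
      rw [hBdef]; ring
    have h3 : τ ^ (n - 1) * τ ^ ((n : ℝ) * μ - ν) = τ ^ ((n : ℝ) - 1 + ((n : ℝ) * μ - ν)) := by
      rw [← Real.rpow_natCast τ (n - 1), ← Real.rpow_add hτpos]
      congr 1
      push_cast [Nat.cast_sub hn]
      ring
    have h4 : (n : ℝ) - 1 + ((n : ℝ) * μ - ν) = (n : ℝ) - 1 + (n : ℝ) * μ - ν := by ring
    rw [h2, h3, h4] at h1
    exact h1
  calc ∑ j ∈ F, Set.indicator S g j ≤ F.card • B := hsum
    _ = (F.card : ℝ) * B := nsmul_eq_mul _ _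
    _ ≤ C₁ * K * τ ^ ((n : ℝ) - 1 + (n : ℝ) * μ - ν) := hfinal
end
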